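/- arXiv:2201.05246 — 6 statements merged into one kernel-verified Lean document; each statement's English description precedes it below -/
import Mathlib

section
/- For every ε with 0 < ε < π/4, the function φ₀ converges to 1 uniformly on the sector {r·e^{iθ} : r ≥ 0, |θ| ≤ π/4 − ε} as |z| → ∞; that is, for every δ > 0 there exists R > 0 such that |φ₀(r·e^{iθ}) − 1| < δ whenever r > R and |θ| ≤ π/4 − ε. -/
open Complex MeasureTheory Filter Topology Set

lemma cpow_half_pi_mul_exp (φ : ℝ) (h1 : -Real.pi < φ) (h2 : φ ≤ Real.pi) :
    ((Real.pi : ℂ) * Complex.exp ((φ : ℂ) * Complex.I)) ^ (1/2 : ℂ)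
      = (Real.sqrt Real.pi : ℂ) * Complex.exp (((φ/2 : ℝ) : ℂ) * Complex.I) := by
  have hπ : (0:ℝ) < Real.pi := Real.pi_pos
  have hw : ((Real.pi : ℂ) * Complex.exp ((φ:ℂ) * Complex.I)) ≠ 0 := by
    apply mul_ne_zero
    · exact_mod_cast hπ.ne'
    · exact Complex.exp_ne_zero _
  rw [Complex.cpow_def_of_ne_zero hw]
  have habs : ‖(Real.pi : ℂ) * Complex.exp ((φ:ℂ) * Complex.I)‖ = Real.pi := by
    rw [norm_mul, Complex.norm_exp_ofReal_mul_I, mul_one, Complex.norm_real, Real.norm_eq_abs, abs_of_pos hπ]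
  have harg : Complex.arg ((Real.pi : ℂ) * Complex.exp ((φ:ℂ) * Complex.I)) = φ := by
    rw [Complex.exp_mul_I]
    exact Complex.arg_mul_cos_add_sin_mul_I hπ ⟨h1, h2⟩
  have hlog : Complex.log ((Real.pi : ℂ) * Complex.exp ((φ:ℂ) * Complex.I))
      = (Real.log Real.pi : ℂ) + (φ:ℂ) * Complex.I := by
    rw [Complex.log, habs, harg]
  rw [hlog]
  have : ((Real.log Real.pi : ℂ) + (φ:ℂ) * Complex.I) * (1/2 : ℂ)
      = ((Real.log Real.pi / 2 : ℝ) : ℂ) + ((φ/2 : ℝ):ℂ) * Complex.I := by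
    push_cast; ring
  rw [this, Complex.exp_add]
  congr 1
  rw [← Complex.ofReal_exp]
  norm_cast
  rw [← Real.log_sqrt hπ.le, Real.exp_log (Real.sqrt_pos.mpr hπ)]

lemma ray_value (θ : ℝ) (hθ : |2*θ| < Real.pi/2) :
    Complex.exp ((θ:ℂ)*Complex.I) *
      ∫ s in Ioi (0:ℝ), Complex.exp (-(Complex.exp (((2*θ:ℝ):ℂ)*Complex.I)) * (s:ℂ)^2)
      = (Real.sqrt Real.pi : ℂ) / 2 := by
  have hπ : (0:ℝ) < Real.pi := Real.pi_pos
  obtain ⟨hl, hu⟩ := abs_lt.mp hθ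
  set b := Complex.exp (((2*θ:ℝ):ℂ)*Complex.I) with hbdef
  have hbre : b.re = Real.cos (2*θ) := Complex.exp_ofReal_mul_I_re _
  have hb : 0 < b.re := by
    rw [hbre]
    exact Real.cos_pos_of_mem_Ioo ⟨by linarith, hu⟩
  rw [integral_gaussian_complex_Ioi hb]
  have hdiv : (Real.pi:ℂ)/b = (Real.pi:ℂ) * Complex.exp ((((-(2*θ)):ℝ):ℂ)*Complex.I) := by
    rw [div_eq_mul_inv, ← Complex.exp_neg]
    congr 1
    push_cast; ring
  rw [hdiv, cpow_half_pi_mul_exp (-(2*θ)) (by linarith) (by linarith)]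
  have h1 : ((-(2*θ)/2 : ℝ):ℂ) * Complex.I = -((θ:ℂ) * Complex.I) := by push_cast; ring
  rw [h1]
  have h2 : Complex.exp ((θ:ℂ)*Complex.I) * Complex.exp (-((θ:ℂ)*Complex.I)) = 1 := by
    rw [← Complex.exp_add, add_neg_cancel, Complex.exp_zero]
  field_simp
  linear_combination h2

lemma tail_bound {b : ℂ} {c r : ℝ} (hc : 0 < c) (hcb : c ≤ b.re) (hr : 0 < r) :
    ‖∫ s in Ioi r, Complex.exp (-b * (s:ℂ)^2)‖ ≤ Real.exp (-c * r^2) / (2*c*r) := by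
  have hb : 0 < b.re := lt_of_lt_of_le hc hcb
  -- the real tail integral
  have hF : ∀ x ∈ Ici r, HasDerivAt (fun s : ℝ => -(2*c)⁻¹ * Real.exp (-c * s^2))
      (x * Real.exp (-c * x^2)) x := by
    intro x _
    have h1 : HasDerivAt (fun s : ℝ => -c * s^2) (-c * (2*x)) x := by
      simpa using ((hasDerivAt_pow 2 x).const_mul (-c))
    have := (h1.exp).const_mul (-(2*c)⁻¹)
    refine this.congr_deriv ?_
    field_simp
  have htend : Tendsto (fun s : ℝ => -(2*c)⁻¹ * Real.exp (-c * s^2)) atTop (𝓝 0) := by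
    have h0 : Tendsto (fun s : ℝ => Real.exp (-c * s^2)) atTop (𝓝 0) :=
      Real.tendsto_exp_atBot.comp
        ((tendsto_pow_atTop two_ne_zero).const_mul_atTop_of_neg (neg_lt_zero.2 hc))
    simpa using h0.const_mul (-(2*c)⁻¹)
  have hint : IntegrableOn (fun s : ℝ => s * Real.exp (-c * s^2)) (Ioi r) :=
    (integrable_mul_exp_neg_mul_sq hc).integrableOn
  have hreal : ∫ s in Ioi r, s * Real.exp (-c * s^2) = Real.exp (-c * r^2) / (2*c) := by
    rw [MeasureTheory.integral_Ioi_of_hasDerivAt_of_tendsto' hF hint htend]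
    field_simp
    ring
  calc ‖∫ s in Ioi r, Complex.exp (-b * (s:ℂ)^2)‖
      ≤ ∫ s in Ioi r, ‖Complex.exp (-b * (s:ℂ)^2)‖ := norm_integral_le_integral_norm _
    _ ≤ ∫ s in Ioi r, (s/r) * Real.exp (-c * s^2) := by
        apply setIntegral_mono_on
        · exact ((integrable_cexp_neg_mul_sq hb).norm).integrableOn
        · have h0 : IntegrableOn (fun s : ℝ => r⁻¹ * (s * Real.exp (-c * s^2))) (Ioi r) :=
            hint.const_mul r⁻¹
          exact h0.congr_fun (fun s _ => by ring) measurableSet_Ioi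
        · exact measurableSet_Ioi
        · intro s hs
          have hs' : r ≤ s := le_of_lt hs
          have h1 : ‖Complex.exp (-b * (s:ℂ)^2)‖ = Real.exp (-b.re * s^2) :=
            norm_cexp_neg_mul_sq b s
          rw [h1]
          have h2 : Real.exp (-b.re * s^2) ≤ Real.exp (-c * s^2) := by
            apply Real.exp_le_exp.mpr
            nlinarith [sq_nonneg s]
          have h3 : (1:ℝ) ≤ s/r := (one_le_div hr).mpr hs'
          nlinarith [Real.exp_pos (-c * s^2)]
    _ = r⁻¹ * ∫ s in Ioi r, s * Real.exp (-c * s^2) := by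
        rw [← integral_const_mul]
        congr 1; ext s; ring
    _ = Real.exp (-c * r^2) / (2*c*r) := by
        rw [hreal]; field_simp

/-- Gross's function `φ₀(z) = (1/2) [ (2/√π) ∫₀^z e^{-w²} dw - e^{-z²} + 1 ]`,
with the integral taken along the straight line segment from `0` to `z`. -/
noncomputable def phi0 (z : ℂ) : ℂ :=
  (1 / 2) * ((2 / (Real.sqrt Real.pi : ℂ)) *
      (∫ t in (0:ℝ)..1, z * Complex.exp (-((t : ℂ) * z) ^ 2))
    - Complex.exp (-z ^ 2) + 1)

set_option maxHeartbeats 1600000 in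
theorem phi0_tendsto_one_uniformly_on_right_sector
    (ε : ℝ) (hε0 : 0 < ε) (hε : ε < Real.pi / 4) :
    ∀ δ : ℝ, 0 < δ → ∃ R : ℝ, 0 < R ∧ ∀ r : ℝ, R < r → ∀ θ : ℝ, |θ| ≤ Real.pi / 4 - ε →
      ‖phi0 ((r : ℂ) * Complex.exp (θ * Complex.I)) - 1‖ < δ := by
  intro δ hδ
  have hπ : (0:ℝ) < Real.pi := Real.pi_pos
  have hsπ : (0:ℝ) < Real.sqrt Real.pi := Real.sqrt_pos.mpr hπ
  set c : ℝ := Real.sin (2*ε) with hcdef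
  have hc : 0 < c := Real.sin_pos_of_pos_of_lt_pi (by linarith) (by linarith)
  set K : ℝ := (Real.sqrt Real.pi)⁻¹ * (2*c)⁻¹ + 1/2 with hKdef
  have hK : 0 < K := by positivity
  -- choose R
  have htend : Tendsto (fun x : ℝ => K * Real.exp (-(c*x))) atTop (𝓝 0) := by
    have h0 : Tendsto (fun x : ℝ => Real.exp (-(c*x))) atTop (𝓝 0) := by
      exact Real.tendsto_exp_atBot.comp
        (tendsto_neg_atTop_atBot.comp (Tendsto.const_mul_atTop hc tendsto_id))
    simpa using h0.const_mul K
  obtain ⟨a, ha⟩ := eventually_atTop.mp (htend.eventually_lt_const hδ)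
  refine ⟨max a 1, lt_of_lt_of_le one_pos (le_max_right a 1), ?_⟩
  intro r hr θ hθ
  have hr1 : (1:ℝ) ≤ r := le_of_lt (lt_of_le_of_lt (le_max_right a 1) hr)
  have hra : a ≤ r := le_of_lt (lt_of_le_of_lt (le_max_left a 1) hr)
  have hr0 : (0:ℝ) < r := lt_of_lt_of_le one_pos hr1
  -- angle bounds
  have h2θ : |2*θ| ≤ Real.pi/2 - 2*ε := by
    have h2a : |2*θ| = 2*|θ| := by rw [abs_mul]; norm_num
    rw [h2a]; linarith
  have h2θ' : |2*θ| < Real.pi/2 := by linarith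
  have hcos : c ≤ Real.cos (2*θ) := by
    have h1 : Real.cos (Real.pi/2 - 2*ε) ≤ Real.cos |2*θ| :=
      Real.cos_le_cos_of_nonneg_of_le_pi (abs_nonneg _) (by linarith) h2θ
    rw [Real.cos_abs] at h1
    rw [hcdef, ← Real.cos_pi_div_two_sub]
    linarith
  set b : ℂ := Complex.exp (((2*θ:ℝ):ℂ)*Complex.I) with hbdef
  have hbre : b.re = Real.cos (2*θ) := Complex.exp_ofReal_mul_I_re _
  have hcb : c ≤ b.re := by rw [hbre]; exact hcos
  have hb : 0 < b.re := lt_of_lt_of_le hc hcb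
  set e : ℂ := Complex.exp ((θ:ℂ)*Complex.I) with hedef
  set z : ℂ := (r:ℂ) * e with hzdef
  have hsq : e^2 = b := by
    rw [hedef, hbdef, sq, ← Complex.exp_add]
    congr 1
    push_cast; ring
  set g : ℝ → ℂ := fun s => Complex.exp (-b * (s:ℂ)^2) with hgdef
  have hgint : Integrable g := integrable_cexp_neg_mul_sq hb
  -- substitution
  have hsub : (∫ t in (0:ℝ)..1, z * Complex.exp (-((t:ℂ)*z)^2))
      = ∫ s in (0:ℝ)..r, e * g s := by
    have hpt : ∀ t : ℝ, z * Complex.exp (-((t:ℂ)*z)^2) = r • (fun s : ℝ => e * g s) (t*r) := by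
      intro t
      have harg : ((t:ℂ)*z)^2 = b * (((t*r:ℝ)):ℂ)^2 := by
        rw [← hsq, hzdef]
        push_cast; ring
      simp only [real_smul, hgdef]
      rw [harg, hzdef]
      ring
    calc ∫ t in (0:ℝ)..1, z * Complex.exp (-((t:ℂ)*z)^2)
        = ∫ t in (0:ℝ)..1, r • (fun s : ℝ => e * g s) (t*r) :=
          intervalIntegral.integral_congr (fun t _ => hpt t)
      _ = r • ∫ t in (0:ℝ)..1, (fun s : ℝ => e * g s) (t*r) :=
          intervalIntegral.integral_smul r _
      _ = ∫ s in (0:ℝ)*r..(1:ℝ)*r, e * g s :=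
          intervalIntegral.smul_integral_comp_mul_right (fun s : ℝ => e * g s) r
      _ = ∫ s in (0:ℝ)..r, e * g s := by rw [zero_mul, one_mul]
  -- split
  have hsplit : ∫ s in (0:ℝ)..r, g s = (∫ s in Ioi (0:ℝ), g s) - ∫ s in Ioi r, g s := by
    have hu : (∫ s in Ioc (0:ℝ) r, g s) + (∫ s in Ioi r, g s) = ∫ s in Ioi (0:ℝ), g s := by
      rw [← setIntegral_union (Set.Ioc_disjoint_Ioi le_rfl) measurableSet_Ioi
        hgint.integrableOn hgint.integrableOn, Set.Ioc_union_Ioi_eq_Ioi hr0.le]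
    rw [intervalIntegral.integral_of_le hr0.le]
    linear_combination hu
  have hray : e * ∫ s in Ioi (0:ℝ), g s = (Real.sqrt Real.pi : ℂ) / 2 := ray_value θ h2θ'
  have hI : (∫ t in (0:ℝ)..1, z * Complex.exp (-((t:ℂ)*z)^2))
      = (Real.sqrt Real.pi:ℂ)/2 - e * ∫ s in Ioi r, g s := by
    rw [hsub, intervalIntegral.integral_const_mul, hsplit, mul_sub, hray]
  -- key identity
  have hsπC : ((Real.sqrt Real.pi : ℝ):ℂ) ≠ 0 := by exact_mod_cast hsπ.ne'
  have key : phi0 z - 1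
      = -(((Real.sqrt Real.pi:ℝ):ℂ)⁻¹ * (e * ∫ s in Ioi r, g s))
        - (1/2) * Complex.exp (-z^2) := by
    rw [phi0, hI]
    field_simp
    ring
  -- norm bounds
  have hzsq : z^2 = ((r^2:ℝ):ℂ) * b := by
    rw [hzdef, ← hsq]; push_cast; ring
  have habsz : ‖Complex.exp (-z^2)‖ ≤ Real.exp (-c * r^2) := by
    rw [Complex.norm_exp]
    apply Real.exp_le_exp.mpr
    rw [hzsq] at *
    have : ((((r^2:ℝ)):ℂ) * b).re = r^2 * b.re := by
      rw [Complex.re_ofReal_mul]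
    rw [neg_re, this]
    nlinarith [sq_nonneg r]
  have htail : ‖∫ s in Ioi r, g s‖ ≤ Real.exp (-c * r^2) / (2*c*r) :=
    tail_bound hc hcb hr0
  have habse : ‖e‖ = 1 := by rw [hedef]; exact Complex.norm_exp_ofReal_mul_I θ
  have hmain : ‖phi0 z - 1‖
      ≤ (Real.sqrt Real.pi)⁻¹ * (Real.exp (-c * r^2) / (2*c*r))
        + (1/2) * Real.exp (-c * r^2) := by
    rw [key]
    have h1 : ‖-(((Real.sqrt Real.pi:ℝ):ℂ)⁻¹ * (e * ∫ s in Ioi r, g s))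
        - (1/2) * Complex.exp (-z^2)‖
        ≤ ‖((Real.sqrt Real.pi:ℝ):ℂ)⁻¹ * (e * ∫ s in Ioi r, g s)‖
          + ‖(1/2 : ℂ) * Complex.exp (-z^2)‖ := by
      simpa [sub_eq_add_neg] using
        norm_add_le (-(((Real.sqrt Real.pi:ℝ):ℂ)⁻¹ * (e * ∫ s in Ioi r, g s)))
          (-((1/2 : ℂ) * Complex.exp (-z^2)))
    refine h1.trans ?_
    rw [norm_mul, norm_mul, norm_mul, norm_inv, habse, one_mul, Complex.norm_real,
      Real.norm_eq_abs, abs_of_pos hsπ]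
    have h2 : ‖∫ s in Ioi r, g s‖ = ‖∫ s in Ioi r, g s‖ := rfl
    have h3 : ‖(1/2 : ℂ)‖ = 1/2 := by norm_num
    rw [h2, h3]
    gcongr
  -- final numeric estimate
  have hEE : Real.exp (-c * r^2) ≤ Real.exp (-(c * r)) := by
    apply Real.exp_le_exp.mpr
    have hrr : r ≤ r^2 := by nlinarith
    nlinarith [mul_le_mul_of_nonneg_left hrr hc.le]
  have hfin : (Real.sqrt Real.pi)⁻¹ * (Real.exp (-c * r^2) / (2*c*r))
        + (1/2) * Real.exp (-c * r^2) ≤ K * Real.exp (-(c*r)) := by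
    have h1 : Real.exp (-c * r^2) / (2*c*r) ≤ Real.exp (-(c*r)) / (2*c) := by
      apply div_le_div₀ (Real.exp_pos _).le hEE (by positivity) (by nlinarith)
    have h2 := mul_le_mul_of_nonneg_left h1 (inv_nonneg.mpr hsπ.le)
    have h4 : (1/2) * Real.exp (-c*r^2) ≤ (1/2) * Real.exp (-(c*r)) := by linarith
    rw [hKdef]
    have h5 : (Real.sqrt Real.pi)⁻¹ * (Real.exp (-(c*r)) / (2*c))
        = (Real.sqrt Real.pi)⁻¹ * (2*c)⁻¹ * Real.exp (-(c*r)) := by ring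
    linarith [h2, h4]
  have hlast := ha r hra
  have hfinal := le_trans hmain hfin
  linarith
end

section
/- For every ε with 0 < ε < π/4, the function φ₀ converges to 0 uniformly on the sector {r·e^{iθ} : r ≥ 0, |θ − π| ≤ π/4 − ε} as |z| → ∞; that is, for every δ > 0 there exists R > 0 such that |φ₀(r·e^{iθ})| < δ whenever r > R and |θ − π| ≤ π/4 − ε. -/
open Complex MeasureTheory Filter Topology

private lemma sq_eq_sq_pos_re {v w : ℂ} (hv : 0 < v.re) (hw : 0 < w.re) (h : v ^ 2 = w ^ 2) :
    v = w := by
  have h1 : (v - w) * (v + w) = 0 := by linear_combination h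
  have h2 : v + w ≠ 0 := by
    intro h0
    have h3 : (v + w).re = 0 := by rw [h0]; simp
    rw [Complex.add_re] at h3; linarith
  rcases mul_eq_zero.mp h1 with h3 | h3
  · exact sub_eq_zero.mp h3
  · exact absurd h3 h2

private lemma cpow_half_eq {v w : ℂ} (hv : 0 < v.re) (hw : 0 < w.re) (hsq : w ^ 2 = v) :
    v ^ (1/2 : ℂ) = w := by
  have hv0 : v ≠ 0 := by intro h; rw [h] at hv; simp at hv
  have hre : 0 < (v ^ (1/2 : ℂ)).re := by
    rw [Complex.cpow_def_of_ne_zero hv0, Complex.exp_re]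
    apply mul_pos (Real.exp_pos _)
    apply Real.cos_pos_of_mem_Ioo
    have harg : |v.arg| < Real.pi / 2 := Complex.abs_arg_lt_pi_div_two_iff.mpr (Or.inl hv)
    have him : (Complex.log v * (1/2 : ℂ)).im = v.arg / 2 := by
      simp [Complex.mul_im, Complex.log_im]
      ring
    rw [him, abs_lt] at *
    constructor <;> [skip; skip] <;> [nlinarith [harg.1, harg.2]; nlinarith [harg.1, harg.2]]
  have hsq2 : (v ^ (1/2 : ℂ)) ^ 2 = v := by
    rw [sq, ← Complex.cpow_add _ _ hv0]
    norm_num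
  exact sq_eq_sq_pos_re hre hw (hsq2.trans hsq.symm)

private lemma integral_Ioi_split {E : Type*} [NormedAddCommGroup E] [NormedSpace ℝ E]
    {f : ℝ → E} (hf : Integrable f) {r : ℝ} (hr : 0 ≤ r) :
    ∫ s in Set.Ioi r, f s = (∫ s in Set.Ioi (0:ℝ), f s) - ∫ s in (0:ℝ)..r, f s := by
  rw [intervalIntegral.integral_of_le hr, ← Set.Ioc_union_Ioi_eq_Ioi hr,
    setIntegral_union Set.Ioc_disjoint_Ioi_same measurableSet_Ioi hf.integrableOn hf.integrableOn]
  abel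

theorem phi0_tendsto_zero_uniformly_on_left_sector
    (ε : ℝ) (hε0 : 0 < ε) (hε : ε < Real.pi / 4) :
    ∀ δ : ℝ, 0 < δ → ∃ R : ℝ, 0 < R ∧ ∀ r : ℝ, R < r → ∀ θ : ℝ, |θ - Real.pi| ≤ Real.pi / 4 - ε →
      ‖phi0 ((r : ℂ) * Complex.exp (θ * Complex.I))‖ < δ := by
  intro δ hδ
  have hπ := Real.pi_pos
  set c : ℝ := Real.sin (2 * ε) with hc_def
  have hc : 0 < c := Real.sin_pos_of_pos_of_lt_pi (by linarith) (by linarith)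
  have hsπ : 0 < Real.sqrt Real.pi := Real.sqrt_pos.mpr hπ
  have hg : Integrable (fun s : ℝ => Real.exp (-c * s ^ 2)) := integrable_exp_neg_mul_sq hc
  set F : ℝ → ℝ := fun r =>
    (1 / Real.sqrt Real.pi) * (∫ s in Set.Ioi r, Real.exp (-c * s ^ 2))
      + (1 / 2) * Real.exp (-c * r ^ 2) with hF_def
  -- F tends to 0
  have htail : Tendsto (fun r : ℝ => ∫ s in Set.Ioi r, Real.exp (-c * s ^ 2)) atTop (𝓝 0) := by
    have h1 : Tendsto (fun r : ℝ => ∫ s in (0:ℝ)..r, Real.exp (-c * s ^ 2)) atTop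
        (𝓝 (∫ s in Set.Ioi (0:ℝ), Real.exp (-c * s ^ 2))) :=
      intervalIntegral_tendsto_integral_Ioi 0 hg.integrableOn tendsto_id
    have h2 := (tendsto_const_nhds (x := ∫ s in Set.Ioi (0:ℝ), Real.exp (-c * s ^ 2))
      (f := (atTop : Filter ℝ))).sub h1
    rw [sub_self] at h2
    refine h2.congr' ?_
    filter_upwards [eventually_ge_atTop (0:ℝ)] with r hr
    exact (integral_Ioi_split hg hr).symm
  have hexp : Tendsto (fun r : ℝ => Real.exp (-c * r ^ 2)) atTop (𝓝 0) := by
    apply Real.tendsto_exp_atBot.comp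
    have h1 : Tendsto (fun r : ℝ => c * r ^ 2) atTop atTop :=
      (tendsto_pow_atTop two_ne_zero).const_mul_atTop hc
    have h2 := tendsto_neg_atTop_atBot.comp h1
    refine h2.congr fun r => ?_
    simp [neg_mul]
  have hF : Tendsto F atTop (𝓝 0) := by
    have h3 := (htail.const_mul (1 / Real.sqrt Real.pi)).add (hexp.const_mul (1 / 2))
    rw [mul_zero, mul_zero, add_zero] at h3
    exact h3
  obtain ⟨R₀, hR₀⟩ := eventually_atTop.mp (hF.eventually_lt_const hδ)
  refine ⟨max R₀ 1, lt_of_lt_of_le one_pos (le_max_right _ _), ?_⟩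
  intro r hr θ hθ
  have hr1 : (1:ℝ) < r := lt_of_le_of_lt (le_max_right _ _) hr
  have hr0 : (0:ℝ) < r := by linarith
  set u : ℂ := Complex.exp (θ * Complex.I) with hu_def
  set b : ℂ := u ^ 2 with hb_def
  set z : ℂ := (r : ℂ) * u with hz_def
  have hu0 : u ≠ 0 := Complex.exp_ne_zero _
  have hb2 : b = Complex.exp (((2 * θ : ℝ) : ℂ) * Complex.I) := by
    rw [hb_def, sq, hu_def, ← Complex.exp_add]
    congr 1
    push_cast
    ring
  have hbre : b.re = Real.cos (2 * θ) := by
    rw [hb2, Complex.exp_ofReal_mul_I_re]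
  have hcos : c ≤ Real.cos (2 * θ) := by
    have h1 : |2 * θ - 2 * Real.pi| ≤ Real.pi / 2 - 2 * ε := by
      rw [show 2 * θ - 2 * Real.pi = 2 * (θ - Real.pi) by ring, abs_mul]
      rw [show |(2:ℝ)| = 2 by norm_num]
      linarith
    calc c = Real.cos (Real.pi / 2 - 2 * ε) := (Real.cos_pi_div_two_sub _).symm
      _ ≤ Real.cos |2 * θ - 2 * Real.pi| :=
          Real.cos_le_cos_of_nonneg_of_le_pi (abs_nonneg _) (by linarith) h1
      _ = Real.cos (2 * θ - 2 * Real.pi) := Real.cos_abs _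
      _ = Real.cos (2 * θ) := Real.cos_sub_two_pi _
  have hbre_pos : 0 < b.re := by rw [hbre]; linarith
  have hintb : Integrable (fun s : ℝ => Complex.exp (-b * (s : ℂ) ^ 2)) :=
    integrable_cexp_neg_mul_sq hbre_pos
  -- step 1: rewrite the interval integral
  have hstep1 : (∫ t in (0:ℝ)..1, z * Complex.exp (-((t : ℂ) * z) ^ 2))
      = u * ∫ s in (0:ℝ)..r, Complex.exp (-b * (s : ℂ) ^ 2) := by
    have h0 : (fun t : ℝ => z * Complex.exp (-((t : ℂ) * z) ^ 2))
        = fun t : ℝ => u * (r • (fun s : ℝ => Complex.exp (-b * (s : ℂ) ^ 2)) (r * t)) := by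
      funext t
      simp only [hz_def, hb_def, Complex.real_smul]
      rw [show (-(((t : ℂ)) * ((r : ℂ) * u)) ^ 2) = -u ^ 2 * (((r * t : ℝ) : ℂ)) ^ 2 by
        push_cast; ring]
      ring
    rw [h0]
    rw [intervalIntegral.integral_const_mul]
    congr 1
    rw [intervalIntegral.integral_smul]
    have h2 := intervalIntegral.smul_integral_comp_mul_left
      (f := fun s : ℝ => Complex.exp (-b * (s : ℂ) ^ 2)) (a := 0) (b := 1) r
    simp only [mul_zero, mul_one] at h2
    exact h2
  -- step 2: split the integral
  have hsplit : (∫ s in (0:ℝ)..r, Complex.exp (-b * (s : ℂ) ^ 2))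
      = (∫ s in Set.Ioi (0:ℝ), Complex.exp (-b * (s : ℂ) ^ 2))
        - ∫ s in Set.Ioi r, Complex.exp (-b * (s : ℂ) ^ 2) := by
    have h1 := integral_Ioi_split hintb hr0.le
    linear_combination h1
  -- step 3: value of the gaussian integral
  have hIoi0 : (∫ s in Set.Ioi (0:ℝ), Complex.exp (-b * (s : ℂ) ^ 2))
      = (-(Real.sqrt Real.pi : ℂ) * u⁻¹) / 2 := by
    rw [integral_gaussian_complex_Ioi hbre_pos]
    congr 1
    apply cpow_half_eq
    · have h1 : ((Real.pi : ℂ) / b).re = Real.pi * Real.cos (2 * θ) := by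
        rw [hb2, div_eq_mul_inv, ← Complex.exp_neg]
        rw [show -(((2 * θ : ℝ) : ℂ) * Complex.I) = ((-(2 * θ) : ℝ) : ℂ) * Complex.I by
          push_cast; ring]
        rw [Complex.re_ofReal_mul, Complex.exp_ofReal_mul_I_re, Real.cos_neg]
      rw [h1]
      exact mul_pos hπ (lt_of_lt_of_le hc hcos)
    · -- 0 < (-(√π) * u⁻¹).re
      have hu_inv : u⁻¹ = Complex.exp (((-θ : ℝ) : ℂ) * Complex.I) := by
        rw [hu_def, ← Complex.exp_neg]
        congr 1
        push_cast
        ring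
      rw [hu_inv, neg_mul, Complex.neg_re, Complex.re_ofReal_mul,
        Complex.exp_ofReal_mul_I_re, Real.cos_neg]
      have hcosθ : 0 < Real.cos (θ - Real.pi) := by
        apply Real.cos_pos_of_mem_Ioo
        have := abs_le.mp hθ
        constructor <;> [linarith [this.1]; linarith [this.2]]
      have hcosθ' : Real.cos θ < 0 := by
        have h2 : Real.cos (θ - Real.pi) = -Real.cos θ := Real.cos_sub_pi θ
        linarith
      nlinarith
    · -- square identity
      have hs2 : ((Real.sqrt Real.pi : ℝ) : ℂ) ^ 2 = (Real.pi : ℂ) := by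
        rw [← Complex.ofReal_pow, Real.sq_sqrt hπ.le]
      calc (-(↑(Real.sqrt Real.pi) : ℂ) * u⁻¹) ^ 2
          = ((Real.sqrt Real.pi : ℝ) : ℂ) ^ 2 * (u ^ 2)⁻¹ := by
            rw [mul_pow, inv_pow, neg_sq]
        _ = (Real.pi : ℂ) / b := by rw [hs2, hb_def, div_eq_mul_inv]
  -- the tail integral and the final estimate
  set T : ℂ := ∫ s in Set.Ioi r, Complex.exp (-b * (s : ℂ) ^ 2) with hT_def
  have hs0 : ((Real.sqrt Real.pi : ℝ) : ℂ) ≠ 0 := Complex.ofReal_ne_zero.mpr hsπ.ne'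
  have key : phi0 z = -(1 / ((Real.sqrt Real.pi : ℝ) : ℂ)) * (u * T)
      - (1 / 2 : ℂ) * Complex.exp (-z ^ 2) := by
    unfold phi0
    rw [hstep1, hsplit, hIoi0]
    field_simp
    ring
  have hT_bound : ‖T‖ ≤ ∫ s in Set.Ioi r, Real.exp (-c * s ^ 2) := by
    rw [hT_def]
    apply norm_integral_le_of_norm_le hg.integrableOn
    filter_upwards with s
    rw [Complex.norm_exp]
    have h1 : (-b * (s : ℂ) ^ 2).re = -Real.cos (2 * θ) * s ^ 2 := by
      rw [show ((s : ℂ) ^ 2) = ((s ^ 2 : ℝ) : ℂ) by push_cast; ring]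
      rw [show (-b * ((s ^ 2 : ℝ) : ℂ)) = ((s ^ 2 : ℝ) : ℂ) * (-b) by ring]
      rw [Complex.re_ofReal_mul, Complex.neg_re, hbre]
      ring
    rw [h1]
    apply Real.exp_le_exp.mpr
    nlinarith [sq_nonneg s]
  have hE_bound : ‖Complex.exp (-z ^ 2)‖ ≤ Real.exp (-c * r ^ 2) := by
    rw [Complex.norm_exp]
    have h1 : (-z ^ 2).re = -(Real.cos (2 * θ) * r ^ 2) := by
      have h2 : -z ^ 2 = ((-(r ^ 2) : ℝ) : ℂ) * b := by
        rw [hz_def, hb_def]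
        push_cast
        ring
      rw [h2, Complex.re_ofReal_mul, hbre]
      ring
    rw [h1]
    apply Real.exp_le_exp.mpr
    nlinarith [sq_nonneg r]
  calc ‖phi0 z‖ = ‖phi0 z‖ := rfl
    _ = ‖-(1 / ((Real.sqrt Real.pi : ℝ) : ℂ)) * (u * T)
          - (1 / 2 : ℂ) * Complex.exp (-z ^ 2)‖ := by rw [key]
    _ ≤ ‖-(1 / ((Real.sqrt Real.pi : ℝ) : ℂ)) * (u * T)‖
          + ‖(1 / 2 : ℂ) * Complex.exp (-z ^ 2)‖ := norm_sub_le _ _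
    _ = (1 / Real.sqrt Real.pi) * ‖T‖ + (1 / 2) * ‖Complex.exp (-z ^ 2)‖ := by
        rw [norm_mul, norm_mul, norm_mul, norm_neg]
        rw [hu_def]
        simp [Complex.norm_exp_ofReal_mul_I, Complex.norm_real,
          abs_of_pos hsπ]
    _ ≤ F r := by
        have hFr : F r = (1 / Real.sqrt Real.pi) * (∫ s in Set.Ioi r, Real.exp (-c * s ^ 2))
            + (1 / 2) * Real.exp (-c * r ^ 2) := rfl
        rw [hFr]
        have h1 : ‖Complex.exp (-z ^ 2)‖ ≤ Real.exp (-c * r ^ 2) := by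
          exact hE_bound
        gcongr
    _ < δ := hR₀ r (le_trans (le_max_left _ _) hr.le)
end

section
/- There exists α ∈ (0, π/2) such that |φ₀(r·e^{iθ})| < 3/4 for every r ≥ 0 and every θ ∈ ℝ with |θ − π| ≤ α/2. -/
open Complex MeasureTheory Filter Topology

lemma abs_exp_sub_one_le_of_re_nonpos {w : ℂ} (hw : w.re ≤ 0) :
    ‖Complex.exp w - 1‖ ≤ ‖w‖ := by
  have hder : ∀ t ∈ Set.uIcc (0:ℝ) 1,
      HasDerivAt (fun t : ℝ => Complex.exp ((t:ℂ) * w)) (Complex.exp ((t:ℂ) * w) * w) t := by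
    intro t _
    have h1 : HasDerivAt (fun t : ℝ => (t:ℂ) * w) w t := by
      simpa using (Complex.ofRealCLM.hasDerivAt (x := t)).mul_const w
    simpa using h1.cexp
  have hcont : IntervalIntegrable (fun t : ℝ => Complex.exp ((t:ℂ) * w) * w)
      MeasureTheory.volume 0 1 := by
    apply Continuous.intervalIntegrable
    fun_prop
  have heq := intervalIntegral.integral_eq_sub_of_hasDerivAt hder hcont
  simp only [Complex.ofReal_one, Complex.ofReal_zero, one_mul, zero_mul, Complex.exp_zero] at heq
  rw [← heq]
  have hb : ∀ t ∈ Set.uIoc (0:ℝ) 1, ‖Complex.exp ((t:ℂ) * w) * w‖ ≤ ‖w‖ := by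
    intro t ht
    rw [Set.uIoc_of_le zero_le_one] at ht
    rw [norm_mul]
    have : ‖Complex.exp ((t:ℂ) * w)‖ ≤ 1 := by
      rw [Complex.norm_exp]
      apply Real.exp_le_one_iff.mpr
      have : ((t:ℂ) * w).re = t * w.re := by simp
      rw [this]
      exact mul_nonpos_of_nonneg_of_nonpos ht.1.le hw
    calc ‖Complex.exp ((t:ℂ) * w)‖ * ‖w‖ ≤ 1 * ‖w‖ := by
          exact mul_le_mul_of_nonneg_right this (norm_nonneg _)
      _ = ‖w‖ := by simp
  calc ‖∫ t in (0:ℝ)..1, Complex.exp ((t:ℂ) * w) * w‖ ≤ ‖w‖ * |1 - 0| :=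
        intervalIntegral.norm_integral_le_of_norm_le_const hb
    _ = ‖w‖ := by simp

lemma gauss_ray_value {θ : ℝ} (hθ : |θ - Real.pi| ≤ 1/20) :
    Complex.exp ((θ:ℂ) * Complex.I) *
      ((↑Real.pi / Complex.exp (((2*θ : ℝ):ℂ) * Complex.I)) ^ (1/2 : ℂ)) =
      -(Real.sqrt Real.pi : ℂ) := by
  set β : ℝ := θ - Real.pi with hβdef
  have hβ : |β| ≤ 1/20 := hθ
  have hu : (↑Real.pi / Complex.exp (((2*θ : ℝ):ℂ) * Complex.I)) =
      Complex.exp ((Real.log Real.pi : ℂ) + ((-2*β : ℝ):ℂ) * Complex.I) := by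
    rw [Complex.exp_add, ← Complex.ofReal_exp, Real.exp_log Real.pi_pos]
    rw [div_eq_mul_inv, ← Complex.exp_neg]
    congr 1
    have h1 : -(((2*θ : ℝ):ℂ) * Complex.I) = ((-2*β : ℝ):ℂ) * Complex.I
        + (-(2 * (Real.pi:ℂ) * Complex.I)) := by
      push_cast [hβdef]; ring
    rw [h1, Complex.exp_add, Complex.exp_neg]
    have : Complex.exp (2 * (Real.pi:ℂ) * Complex.I) = 1 := by
      simpa [mul_comm, mul_assoc] using Complex.exp_two_pi_mul_I
    rw [this, inv_one, mul_one]
  rw [hu]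
  have him1 : -Real.pi < ((Real.log Real.pi : ℂ) + ((-2*β : ℝ):ℂ) * Complex.I).im := by
    simp only [Complex.add_im, Complex.ofReal_im, Complex.mul_im, Complex.I_im, Complex.I_re,
      Complex.ofReal_re, mul_one, mul_zero, zero_add, add_zero]
    have := abs_le.mp hβ
    nlinarith [Real.pi_gt_three]
  have him2 : ((Real.log Real.pi : ℂ) + ((-2*β : ℝ):ℂ) * Complex.I).im ≤ Real.pi := by
    simp only [Complex.add_im, Complex.ofReal_im, Complex.mul_im, Complex.I_im, Complex.I_re,
      Complex.ofReal_re, mul_one, mul_zero, zero_add, add_zero]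
    have := abs_le.mp hβ
    nlinarith [Real.pi_gt_three]
  rw [Complex.cpow_def_of_ne_zero (Complex.exp_ne_zero _), Complex.log_exp him1 him2]
  have hhalf : ((Real.log Real.pi : ℂ) + ((-2*β : ℝ):ℂ) * Complex.I) * (1/2)
      = ((Real.log Real.pi / 2 : ℝ):ℂ) + ((-β : ℝ):ℂ) * Complex.I := by
    push_cast; ring
  rw [hhalf, Complex.exp_add, ← Complex.ofReal_exp]
  have hsq : Real.exp (Real.log Real.pi / 2) = Real.sqrt Real.pi := by
    rw [← Real.log_sqrt Real.pi_pos.le, Real.exp_log (Real.sqrt_pos.mpr Real.pi_pos)]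
  rw [hsq, ← mul_assoc, mul_comm (Complex.exp ((θ:ℂ)*Complex.I)) ((Real.sqrt Real.pi : ℝ) : ℂ),
    mul_assoc, ← Complex.exp_add]
  have : (θ:ℂ) * Complex.I + ((-β : ℝ):ℂ) * Complex.I = (Real.pi:ℂ) * Complex.I := by
    push_cast [hβdef]; ring
  rw [this, Complex.exp_pi_mul_I, mul_neg_one]

set_option maxHeartbeats 1000000 in
theorem phi0_small_on_a_left_sector :
    ∃ α : ℝ, 0 < α ∧ α < Real.pi / 2 ∧
      ∀ r : ℝ, 0 ≤ r → ∀ θ : ℝ, |θ - Real.pi| ≤ α / 2 →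
        ‖phi0 ((r : ℂ) * Complex.exp (θ * Complex.I))‖ < 3 / 4 := by
  refine ⟨1/10, by norm_num, by nlinarith [Real.pi_gt_three], ?_⟩
  intro r hr θ hθ
  have hθ' : |θ - Real.pi| ≤ 1/20 := by linarith [hθ]
  set z : ℂ := (r : ℂ) * Complex.exp ((θ:ℝ) * Complex.I) with hzdef
  set a : ℂ := Complex.exp (((2*θ : ℝ):ℂ) * Complex.I) with hadef
  set c : ℝ := Real.cos (2*θ) with hcdef
  have hβ := abs_le.mp hθ'
  have hc : (199/200 : ℝ) ≤ c := by
    have h1 : Real.cos (2*θ) = Real.cos (2*(θ - Real.pi)) := by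
      have : (2*θ : ℝ) = 2*(θ - Real.pi) + 2*Real.pi := by ring
      rw [this, Real.cos_add_two_pi]
    have h2 := Real.one_sub_sq_div_two_le_cos (x := 2*(θ - Real.pi))
    rw [hcdef, h1]
    nlinarith [hβ.1, hβ.2]
  have hc1 : c ≤ 1 := Real.cos_le_one _
  have hcpos : (0:ℝ) < c := by linarith
  have ha_re : a.re = c := by
    rw [hadef, hcdef]
    exact_mod_cast Complex.exp_ofReal_mul_I_re (2*θ)
  have ha_repos : 0 < a.re := by rw [ha_re]; exact hcpos
  have ha_abs : ‖a‖ = 1 := by rw [hadef]; exact Complex.norm_exp_ofReal_mul_I _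
  have habs : ∀ x : ℝ, ‖Complex.exp (-a * (x:ℂ)^2)‖ = Real.exp (-(c * x^2)) := by
    intro x
    rw [Complex.norm_exp]
    congr 1
    have h1 : (-a * (x:ℂ)^2).re = -(a.re * x^2) := by
      simp [Complex.mul_re, ← Complex.ofReal_pow]
    rw [h1, ha_re]
  have hz2 : z^2 = ((r^2 : ℝ) : ℂ) * a := by
    rw [hzdef, hadef, mul_pow, sq (Complex.exp _), ← Complex.exp_add]
    have : ((θ:ℝ):ℂ) * Complex.I + ((θ:ℝ):ℂ) * Complex.I = ((2*θ:ℝ):ℂ) * Complex.I := by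
      push_cast; ring
    rw [this]
    push_cast
    ring
  have htz : ∀ t : ℝ, -(((t:ℂ) * z)^2) = -a * (((r*t : ℝ)):ℂ)^2 := by
    intro t
    rw [mul_pow, hz2]
    push_cast
    ring
  have habs_ez : ‖Complex.exp (-z^2)‖ = Real.exp (-(c * r^2)) := by
    have h1 : -z^2 = -a * ((r:ℝ):ℂ)^2 := by rw [hz2]; push_cast; ring
    rw [h1, habs r]
  have hsqrt_pos : (0:ℝ) < Real.sqrt Real.pi := Real.sqrt_pos.mpr Real.pi_pos
  have hsqrt : (177/100 : ℝ) ≤ Real.sqrt Real.pi := by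
    rw [show (177/100 : ℝ) = Real.sqrt ((177/100)^2) by
      rw [Real.sqrt_sq]; norm_num]
    apply Real.sqrt_le_sqrt
    nlinarith [Real.pi_gt_d6]
  have habs_half : ‖(2 : ℂ) / ((Real.sqrt Real.pi : ℝ) : ℂ)‖ =
      2 / Real.sqrt Real.pi := by
    rw [norm_div, Complex.norm_two, Complex.norm_real, Real.norm_eq_abs, _root_.abs_of_pos hsqrt_pos]
  have habs12 : ‖(1:ℂ)/2‖ = 1/2 := by
    rw [norm_div, norm_one, Complex.norm_two]
  rcases le_or_gt r (7/10) with hsm | hlg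
  · -- small radius case
    have hIb : ‖∫ t in (0:ℝ)..1, z * Complex.exp (-((t:ℂ) * z)^2)‖ ≤ r := by
      have hb : ∀ t ∈ Set.uIoc (0:ℝ) 1, ‖z * Complex.exp (-((t:ℂ) * z)^2)‖ ≤ r := by
        intro t ht
        rw [norm_mul]
        have habsz : ‖z‖ = r := by
          rw [hzdef, norm_mul, Complex.norm_real, Real.norm_eq_abs, Complex.norm_exp_ofReal_mul_I,
            _root_.abs_of_nonneg hr, mul_one]
        rw [habsz, htz t, habs (r*t)]
        calc r * Real.exp (-(c * (r*t)^2)) ≤ r * 1 := by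
              apply mul_le_mul_of_nonneg_left _ hr
              apply Real.exp_le_one_iff.mpr
              nlinarith [sq_nonneg (r*t)]
          _ = r := mul_one r
      calc ‖∫ t in (0:ℝ)..1, z * Complex.exp (-((t:ℂ) * z)^2)‖ ≤ r * |1 - 0| :=
            intervalIntegral.norm_integral_le_of_norm_le_const hb
        _ = r := by simp
    have hEb : ‖Complex.exp (-z^2) - 1‖ ≤ r^2 := by
      have hre : (-z^2).re ≤ 0 := by
        have h1 : (-z^2).re = -(r^2 * a.re) := by
          rw [hz2]
          simp [Complex.mul_re, ← Complex.ofReal_pow]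
        rw [h1, ha_re]
        nlinarith [sq_nonneg r]
      refine (abs_exp_sub_one_le_of_re_nonpos hre).trans ?_
      rw [norm_neg, hz2, norm_mul, Complex.norm_real, Real.norm_eq_abs, ha_abs, mul_one,
        _root_.abs_of_nonneg (sq_nonneg r)]
    have hphi : phi0 z = (1/2 : ℂ) * (((2:ℂ) / ((Real.sqrt Real.pi : ℝ):ℂ)) *
        (∫ t in (0:ℝ)..1, z * Complex.exp (-((t:ℂ) * z)^2))
        - (Complex.exp (-z^2) - 1)) := by
      rw [phi0]; ring
    have h1 : ‖((2:ℂ) / ((Real.sqrt Real.pi : ℝ):ℂ)) *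
        (∫ t in (0:ℝ)..1, z * Complex.exp (-((t:ℂ) * z)^2))‖ ≤ (2 / Real.sqrt Real.pi) * r := by
      rw [norm_mul, habs_half]
      exact mul_le_mul_of_nonneg_left hIb (by positivity)
    have h2 : ‖((2:ℂ) / ((Real.sqrt Real.pi : ℝ):ℂ)) *
        (∫ t in (0:ℝ)..1, z * Complex.exp (-((t:ℂ) * z)^2)) - (Complex.exp (-z^2) - 1)‖
        ≤ (2 / Real.sqrt Real.pi) * r + r^2 :=
      (norm_sub_le _ _).trans (add_le_add h1 hEb)
    rw [hphi, norm_mul, habs12]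
    have h3 : 2 / Real.sqrt Real.pi ≤ 2 / (177/100) :=
      div_le_div_of_nonneg_left (by norm_num) (by norm_num) hsqrt
    have h4 : (2 / Real.sqrt Real.pi) * r ≤ (2/(177/100)) * r :=
      mul_le_mul_of_nonneg_right h3 hr
    nlinarith
  · -- large radius case
    have hrpos : (0:ℝ) < r := lt_trans (by norm_num) hlg
    set g : ℝ → ℂ := fun s => Complex.exp (-a * (s:ℂ)^2) with hgdef
    have hg_int : Integrable g := integrable_cexp_neg_mul_sq ha_repos
    set T : ℂ := ∫ s in Set.Ioi r, g s with hT
    have hIeq : (∫ t in (0:ℝ)..1, z * Complex.exp (-((t:ℂ) * z)^2))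
        = Complex.exp (((θ:ℝ):ℂ) * Complex.I) * ∫ s in (0:ℝ)..r, g s := by
      have e1 : (fun t : ℝ => z * Complex.exp (-((t:ℂ) * z)^2)) = fun t : ℝ => z * g (r * t) := by
        funext t
        rw [hgdef]
        simp only
        rw [htz t]
      rw [e1, intervalIntegral.integral_const_mul,
        intervalIntegral.integral_comp_mul_left g (ne_of_gt hrpos)]
      simp only [mul_zero, mul_one]
      rw [Complex.real_smul, hzdef]
      push_cast
      have hrC : (r:ℂ) ≠ 0 := by exact_mod_cast ne_of_gt hrpos
      field_simp
    have hsplit : (∫ s in Set.Ioi (0:ℝ), g s) = (∫ s in (0:ℝ)..r, g s) + T := by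
      rw [intervalIntegral.integral_of_le hr, hT,
        ← setIntegral_union (Set.Ioc_disjoint_Ioi le_rfl) measurableSet_Ioi
          hg_int.integrableOn hg_int.integrableOn,
        Set.Ioc_union_Ioi_eq_Ioi hr]
    have hgauss : (∫ s in Set.Ioi (0:ℝ), g s) = ((Real.pi:ℂ) / a) ^ (1/2:ℂ) / 2 :=
      integral_gaussian_complex_Ioi ha_repos
    have hray : Complex.exp (((θ:ℝ):ℂ) * Complex.I) * (((Real.pi:ℂ) / a) ^ (1/2:ℂ))
        = -((Real.sqrt Real.pi : ℝ) : ℂ) := by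
      rw [hadef]
      exact gauss_ray_value hθ'
    have hkey : Complex.exp (((θ:ℝ):ℂ) * Complex.I) * ∫ s in (0:ℝ)..r, g s
        = -(((Real.sqrt Real.pi : ℝ):ℂ))/2 - Complex.exp (((θ:ℝ):ℂ) * Complex.I) * T := by
      have h1 : (∫ s in (0:ℝ)..r, g s) = ((Real.pi:ℂ)/a)^(1/2:ℂ)/2 - T := by
        rw [← hgauss, hsplit]; ring
      rw [h1]
      calc Complex.exp (((θ:ℝ):ℂ) * Complex.I) * (((Real.pi:ℂ)/a)^(1/2:ℂ)/2 - T)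
          = (Complex.exp (((θ:ℝ):ℂ) * Complex.I) * (((Real.pi:ℂ)/a)^(1/2:ℂ)))/2
            - Complex.exp (((θ:ℝ):ℂ) * Complex.I) * T := by ring
        _ = -(((Real.sqrt Real.pi : ℝ):ℂ))/2 - Complex.exp (((θ:ℝ):ℂ) * Complex.I) * T := by
            rw [hray]
    have hπC : ((Real.sqrt Real.pi : ℝ):ℂ) ≠ 0 := by
      exact_mod_cast ne_of_gt hsqrt_pos
    have hphi2 : phi0 z = (1/2 : ℂ) * (-(((2:ℂ) / ((Real.sqrt Real.pi : ℝ):ℂ)) *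
        (Complex.exp (((θ:ℝ):ℂ) * Complex.I) * T)) - Complex.exp (-z^2)) := by
      rw [phi0, hIeq, hkey]
      field_simp
      ring
    -- bound on the tail integral T
    have h2cr : (0:ℝ) < 2*c*r := by positivity
    have hbint : IntegrableOn (fun s : ℝ => Real.exp (-(c * s^2))) (Set.Ioi r) := by
      have h := (integrable_exp_neg_mul_sq hcpos).integrableOn (s := Set.Ioi r)
      simpa [neg_mul] using h
    have hbint2 : IntegrableOn (fun s : ℝ => Real.exp (c*r^2) * Real.exp (-(2*c*r) * s))
        (Set.Ioi r) :=
      (exp_neg_integrableOn_Ioi r h2cr).const_mul _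
    have hb1 : ‖T‖ ≤ ∫ s in Set.Ioi r, Real.exp (-(c * s^2)) := by
      rw [hT]
      apply MeasureTheory.norm_integral_le_of_norm_le hbint
      filter_upwards with s
      rw [hgdef]
      simp only
      rw [habs s]
    have hb2 : (∫ s in Set.Ioi r, Real.exp (-(c * s^2)))
        ≤ ∫ s in Set.Ioi r, Real.exp (c*r^2) * Real.exp (-(2*c*r) * s) := by
      apply setIntegral_mono_on hbint hbint2 measurableSet_Ioi
      intro s hs
      rw [← Real.exp_add]
      apply Real.exp_le_exp.mpr
      have hs' : r < s := hs
      nlinarith [sq_nonneg (s - r)]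
    have hval : (∫ s in Set.Ioi r, Real.exp (-(2*c*r) * s))
        = (2*c*r)⁻¹ * Real.exp (-(2*c*r*r)) := by
      have h := MeasureTheory.integral_comp_mul_left_Ioi (fun x => Real.exp (-x)) r h2cr
      simp only [smul_eq_mul, integral_exp_neg_Ioi] at h
      simp_rw [neg_mul]
      exact h
    have hTb : ‖T‖ ≤ Real.exp (-(c*r^2)) / (2*c*r) := by
      refine (hb1.trans hb2).trans (le_of_eq ?_)
      rw [integral_const_mul, hval, mul_comm ((2*c*r)⁻¹) (Real.exp (-(2*c*r*r))),
        ← mul_assoc, ← Real.exp_add, show c*r^2 + -(2*c*r*r) = -(c*r^2) by ring,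
        div_eq_mul_inv]
    -- final numeric bound
    have hE : Real.exp (-(c*r^2)) ≤ 20000/29751 := by
      have hx : (9751/20000 : ℝ) ≤ c*r^2 := by nlinarith
      have h1 : c*r^2 + 1 ≤ Real.exp (c*r^2) := by
        have := Real.add_one_le_exp (c*r^2); linarith
      rw [Real.exp_neg, show (20000/29751 : ℝ) = ((29751/20000 : ℝ))⁻¹ by norm_num]
      apply inv_anti₀ (by norm_num)
      linarith
    have hcr : (1393/1000 : ℝ) ≤ 2*c*r := by nlinarith
    have hTb2 : ‖T‖ ≤ (20000/29751) / (1393/1000) := by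
      refine hTb.trans ?_
      exact div_le_div₀ (by norm_num) hE (by norm_num) hcr
    rw [hphi2, norm_mul, habs12]
    have hfin1 : ‖-(((2:ℂ) / ((Real.sqrt Real.pi : ℝ):ℂ)) *
        (Complex.exp (((θ:ℝ):ℂ) * Complex.I) * T)) - Complex.exp (-z^2)‖
        ≤ (2 / Real.sqrt Real.pi) * ‖T‖ + Real.exp (-(c*r^2)) := by
      refine (norm_sub_le _ _).trans ?_
      rw [norm_neg, norm_mul, norm_mul, habs_half, Complex.norm_exp_ofReal_mul_I,
        one_mul, habs_ez]
    have h5 : 2 / Real.sqrt Real.pi ≤ 2 / (177/100) :=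
      div_le_div_of_nonneg_left (by norm_num) (by norm_num) hsqrt
    have h6 : (2 / Real.sqrt Real.pi) * ‖T‖
        ≤ (2/(177/100)) * ((20000/29751) / (1393/1000)) :=
      mul_le_mul h5 hTb2 (norm_nonneg _) (by norm_num)
    have h7 : (1/2 : ℝ) * ((2/(177/100)) * ((20000/29751) / (1393/1000)) + 20000/29751)
        < 3/4 := by norm_num
    nlinarith [hfin1]
end

section
/- Let P = P₁ ∪ P₂ ∪ P₃ ∪ P₄ where P₁ = ℚ ∩ [0,1), P₂ = {−z : z ∈ P₁}, P₃ = {i·z : z ∈ P₁}, P₄ = {−i·z : z ∈ P₁}, regarded as a subset of ℂ, and let (β_n)_{n∈ℕ} be any enumeration of P (a surjection from ℕ onto P with |β_n| < 1 for all n). Then for every ω ∈ ℂ there exists a set A ⊆ ℕ such that ∑_{n∈A} |β_n| < ∞ and ∑_{n∈A} β_n = ω. -/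
open Complex Filter Topology

noncomputable def pickQ (x : ℝ) : ℚ :=
  if h : 0 < x then (exists_rat_btwn (by linarith : x/2 < 3/4*x)).choose else 0

lemma pickQ_spec {x : ℝ} (h : 0 < x) :
    x/2 < (pickQ x : ℝ) ∧ ((pickQ x : ℝ) < 3/4*x) := by
  rw [pickQ, dif_pos h]
  exact (exists_rat_btwn (by linarith : x/2 < 3/4*x)).choose_spec

noncomputable def remSeq (s : ℝ) : ℕ → ℝ
  | 0 => s
  | k+1 => remSeq s k - pickQ (remSeq s k)

noncomputable def qSeq (s : ℝ) (k : ℕ) : ℚ := pickQ (remSeq s k)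

variable {s : ℝ}

lemma remSeq_pos (hs : 0 < s) : ∀ k, 0 < remSeq s k := by
  intro k
  induction k with
  | zero => exact hs
  | succ k ih =>
    have h := pickQ_spec ih
    show 0 < remSeq s k - pickQ (remSeq s k)
    linarith [h.2]

lemma remSeq_succ_lt (hs : 0 < s) (k : ℕ) : remSeq s (k+1) < remSeq s k / 2 := by
  have h := pickQ_spec (remSeq_pos hs k)
  show remSeq s k - pickQ (remSeq s k) < _
  linarith [h.1]

lemma remSeq_bound (hs : 0 < s) : ∀ k, remSeq s k ≤ s * (1/2)^k := by
  intro k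
  induction k with
  | zero => simp [remSeq]
  | succ k ih =>
    have h := remSeq_succ_lt hs k
    have : remSeq s (k+1) ≤ remSeq s k / 2 := le_of_lt h
    calc remSeq s (k+1) ≤ remSeq s k / 2 := this
    _ ≤ s * (1/2)^k / 2 := by linarith
    _ = s * (1/2)^(k+1) := by ring

lemma qSeq_pos (hs : 0 < s) (k : ℕ) : 0 < (qSeq s k : ℝ) := by
  have h := pickQ_spec (remSeq_pos hs k)
  have := remSeq_pos hs k
  unfold qSeq
  linarith [h.1]

lemma qSeq_lt (hs : 0 < s) (k : ℕ) : (qSeq s k : ℝ) < 3/4 * remSeq s k :=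
  (pickQ_spec (remSeq_pos hs k)).2

lemma qSeq_anti (hs : 0 < s) : StrictAnti fun k => (qSeq s k : ℝ) := by
  apply strictAnti_nat_of_succ_lt
  intro k
  have h1 := qSeq_lt hs (k+1)
  have h2 := remSeq_succ_lt hs k
  have h3 := (pickQ_spec (remSeq_pos hs k)).1
  have h4 := remSeq_pos hs k
  show (qSeq s (k+1) : ℝ) < qSeq s k
  unfold qSeq at *
  linarith

lemma qSeq_sum (hs : 0 < s) : ∀ k, ∑ j ∈ Finset.range k, (qSeq s j : ℝ) = s - remSeq s k := by
  intro k
  induction k with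
  | zero => simp [remSeq]
  | succ k ih =>
    rw [Finset.sum_range_succ, ih]
    show _ = s - (remSeq s k - pickQ (remSeq s k))
    unfold qSeq
    ring

lemma qSeq_summable (hs : 0 < s) : Summable fun k => (qSeq s k : ℝ) := by
  have hg : Summable fun k : ℕ => s * (1/2)^k :=
    (summable_geometric_of_lt_one (by norm_num) (by norm_num)).mul_left s
  refine Summable.of_nonneg_of_le (fun k => le_of_lt (qSeq_pos hs k)) (fun k => ?_) hg
  have h1 := qSeq_lt hs k
  have h2 := remSeq_bound hs k
  have h3 := remSeq_pos hs k
  linarith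

lemma qSeq_tsum (hs : 0 < s) : ∑' k, (qSeq s k : ℝ) = s := by
  have hsum := qSeq_summable hs
  have h1 : Tendsto (fun k => ∑ j ∈ Finset.range k, (qSeq s j : ℝ)) atTop
      (𝓝 (∑' k, (qSeq s k : ℝ))) := hsum.hasSum.tendsto_sum_nat
  have hrem : Tendsto (fun k => remSeq s k) atTop (𝓝 0) := by
    apply squeeze_zero (fun k => le_of_lt (remSeq_pos hs k)) (remSeq_bound hs)
    have := tendsto_pow_atTop_nhds_zero_of_lt_one (by norm_num : (0:ℝ) ≤ 1/2) (by norm_num)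
    simpa using this.const_mul s
  have h2 : Tendsto (fun k => ∑ j ∈ Finset.range k, (qSeq s j : ℝ)) atTop (𝓝 s) := by
    have : (fun k => ∑ j ∈ Finset.range k, (qSeq s j : ℝ)) = fun k => s - remSeq s k := by
      funext k; exact qSeq_sum hs k
    rw [this]
    simpa using (tendsto_const_nhds (x := s)).sub hrem
  exact tendsto_nhds_unique h1 h2

lemma gaussQ (n : ℕ) : ∑ j ∈ Finset.range n, (j : ℚ) = n * (n - 1) / 2 := by
  induction n with
  | zero => simp
  | succ n ih =>
    rw [Finset.sum_range_succ, ih]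
    push_cast
    ring

lemma key (r : ℝ) (hr : 0 ≤ r) :
    ∃ S : Set ℚ, (∀ q ∈ S, 0 < q ∧ q < 1) ∧
      Summable (fun q : S => (q : ℝ)) ∧ ∑' q : S, (q : ℝ) = r := by
  rcases eq_or_lt_of_le hr with h0 | h0
  · refine ⟨∅, by simp, ?_, ?_⟩
    · exact summable_empty
    · rw [tsum_empty]; exact h0
  -- r > 0
  set n : ℕ := ⌈2*r⌉₊ - 1 with hn
  have hceil1 : 1 ≤ ⌈2*r⌉₊ := Nat.one_le_ceil_iff.mpr (by linarith)
  have hncast : (n : ℝ) = (⌈2*r⌉₊ : ℝ) - 1 := by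
    rw [hn, Nat.cast_sub hceil1]; norm_num
  have hnlt : (n : ℝ) < 2*r := by
    have := Nat.ceil_lt_add_one (by linarith : (0:ℝ) ≤ 2*r)
    rw [hncast]; linarith
  have hnge : 2*r ≤ (n : ℝ) + 1 := by
    have := Nat.le_ceil (2*r)
    rw [hncast]; linarith
  set s : ℝ := r - n/2 with hsdef
  have hs : 0 < s := by rw [hsdef]; linarith
  have hs2 : s ≤ 1/2 := by rw [hsdef]; linarith
  -- the prefix
  set a : ℕ → ℚ := fun j => 1/2 + ((j:ℚ) - ((n:ℚ)-1)/2)/(8*(n:ℚ)) with ha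
  have hbounds : ∀ j < n, 3/8 < a j ∧ a j < 1 := by
    intro j hj
    have hnpos : 0 < n := lt_of_le_of_lt (Nat.zero_le j) hj
    have hn1 : 1 ≤ (n:ℚ) := by exact_mod_cast hnpos
    have hj1 : (j:ℚ) ≤ (n:ℚ) - 1 := by
      have : (j:ℚ) + 1 ≤ (n:ℚ) := by exact_mod_cast hj
      linarith
    have hj0 : (0:ℚ) ≤ (j:ℚ) := by positivity
    have h8 : (0:ℚ) < 8*(n:ℚ) := by linarith
    constructor
    · rw [ha]
      simp only []
      rw [show (3/8 : ℚ) = 1/2 + (-(1/8)) by norm_num]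
      have : -(1/8) < ((j:ℚ) - ((n:ℚ)-1)/2)/(8*(n:ℚ)) := by
        rw [lt_div_iff₀ h8]
        nlinarith
      linarith
    · rw [ha]
      simp only []
      have : ((j:ℚ) - ((n:ℚ)-1)/2)/(8*(n:ℚ)) < 1/8 := by
        rw [div_lt_iff₀ h8]
        nlinarith
      linarith
  have hainj : ∀ x ∈ Finset.range n, ∀ y ∈ Finset.range n, a x = a y → x = y := by
    intro x hx y hy hxy
    have hn0 : (0:ℚ) < (n:ℚ) := by
      have : 0 < n := lt_of_le_of_lt (Nat.zero_le x) (Finset.mem_range.mp hx)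
      exact_mod_cast this
    rw [ha] at hxy
    simp only [] at hxy
    have h8 : (8*(n:ℚ)) ≠ 0 := by positivity
    field_simp at hxy
    have hxy' : (x:ℚ) = (y:ℚ) := by linarith
    exact_mod_cast hxy'
  set F : Finset ℚ := (Finset.range n).image a with hF
  have hFsum : ∑ q ∈ F, (q:ℚ) = (n:ℚ)/2 := by
    rw [hF, Finset.sum_image hainj]
    rcases Nat.eq_zero_or_pos n with h | h
    · simp [h]
    · have hn0 : (n:ℚ) ≠ 0 := by
        have : (0:ℚ) < (n:ℚ) := by exact_mod_cast h
        linarith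
      rw [ha]
      simp only []
      rw [Finset.sum_add_distrib, Finset.sum_const, Finset.card_range, ← Finset.sum_div,
        Finset.sum_sub_distrib, gaussQ, Finset.sum_const, Finset.card_range]
      field_simp
      simp only [nsmul_eq_mul]; ring
  -- the set S
  set S : Set ℚ := (↑F : Set ℚ) ∪ Set.range (qSeq s) with hS
  have hqlt38 : ∀ k, (qSeq s k : ℝ) < 3/8 := by
    intro k
    have h1 := qSeq_lt hs k
    have h2 := remSeq_bound hs k
    have h3 : (1/2:ℝ)^k ≤ 1 := by
      apply pow_le_one₀ <;> norm_num
    nlinarith [remSeq_pos hs k]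
  have hdisj : Disjoint (↑F : Set ℚ) (Set.range (qSeq s)) := by
    rw [Set.disjoint_left]
    rintro q hqF ⟨k, rfl⟩
    have h1 : (3/8:ℚ) < qSeq s k := by
      rcases Finset.mem_image.mp hqF with ⟨j, hj, hjq⟩
      have := (hbounds j (Finset.mem_range.mp hj)).1
      rw [hjq] at this; exact this
    have h2 := hqlt38 k
    have h3 : ((3/8:ℚ):ℝ) < ((qSeq s k : ℚ) : ℝ) := by exact_mod_cast h1
    push_cast at h3
    linarith
  have hqinj : Function.Injective (qSeq s) := by
    intro x y hxy
    exact (qSeq_anti hs).injective (by rw [hxy])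
  -- summability pieces
  have hsumF : Summable ((fun q : ℚ => (q:ℝ)) ∘ ((↑) : (↑F : Set ℚ) → ℚ)) :=
    F.finite_toSet.summable _
  have hsumR : Summable ((fun q : ℚ => (q:ℝ)) ∘ ((↑) : (Set.range (qSeq s)) → ℚ)) := by
    rw [← (Equiv.ofInjective _ hqinj).summable_iff]
    exact qSeq_summable hs
  refine ⟨S, ?_, ?_, ?_⟩
  · rintro q (hq | ⟨k, rfl⟩)
    · rcases Finset.mem_image.mp hq with ⟨j, hj, rfl⟩
      obtain ⟨hb1, hb2⟩ := hbounds j (Finset.mem_range.mp hj)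
      exact ⟨lt_trans (by norm_num) hb1, hb2⟩
    · constructor
      · have := qSeq_pos hs k; exact_mod_cast this
      · have h := hqlt38 k
        have : (qSeq s k : ℝ) < 1 := by linarith
        exact_mod_cast this
  · exact (hsumF.hasSum.add_disjoint hdisj hsumR.hasSum).summable
  · rw [hS, Summable.tsum_union_disjoint hdisj hsumF hsumR]
    have h1 : ∑' (q : (↑F : Set ℚ)), ((q:ℚ):ℝ) = (n:ℝ)/2 := by
      rw [F.tsum_subtype' (fun q : ℚ => (q:ℝ))]
      have : ∑ q ∈ F, ((q:ℚ):ℝ) = (((∑ q ∈ F, q : ℚ)):ℝ) := by push_cast; rfl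
      rw [this, hFsum]
      push_cast; ring
    have h2 : ∑' (q : Set.range (qSeq s)), ((q:ℚ):ℝ) = s := by
      rw [tsum_range (fun q : ℚ => (q:ℝ)) hqinj]
      exact qSeq_tsum hs
    rw [h1, h2, hsdef]
    ring

lemma partC (c : ℂ) (hc : ‖c‖ = 1) (r : ℝ) (hr : 0 ≤ r) :
    ∃ V : Set ℂ, (∀ z ∈ V, ∃ q : ℚ, 0 < q ∧ q < 1 ∧ z = c * (q:ℂ)) ∧
      Summable (fun z : V => ‖(z:ℂ)‖) ∧
      Summable (fun z : V => (z : ℂ)) ∧ ∑' z : V, (z:ℂ) = c * r := by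
  obtain ⟨S, hS, hsum, htsum⟩ := key r hr
  have hc0 : c ≠ 0 := by intro h; rw [h] at hc; simp at hc
  set g : ℚ → ℂ := fun q => c * (q:ℂ) with hg
  have hginj : Function.Injective g := by
    intro x y h
    have := mul_left_cancel₀ hc0 h
    exact_mod_cast this
  have hcomp : ∀ q : S, ‖g q‖ = (q : ℝ) := by
    intro q
    have hq0 : (0:ℝ) ≤ ((q:ℚ):ℝ) := le_of_lt (by exact_mod_cast (hS q q.2).1)
    have h1 : ((q:ℚ):ℂ) = (((q:ℚ):ℝ):ℂ) := by push_cast; rfl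
    rw [hg]
    simp only [norm_mul, hc, h1, Complex.norm_real, Real.norm_eq_abs, _root_.abs_of_nonneg hq0, one_mul]
  have habs : Summable fun z : (g '' S) => ‖(z:ℂ)‖ := by
    rw [← (Equiv.Set.imageOfInjOn g S hginj.injOn).summable_iff]
    have : ((fun z : (g '' S) => ‖(z:ℂ)‖) ∘ (Equiv.Set.imageOfInjOn g S hginj.injOn)) =
        fun q : S => (q : ℝ) := by
      funext q
      exact hcomp q
    rw [this]
    exact hsum
  refine ⟨g '' S, ?_, habs, ?_, ?_⟩
  · rintro z ⟨q, hq, rfl⟩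
    exact ⟨q, (hS q hq).1, (hS q hq).2, rfl⟩
  · apply Summable.of_norm
    have : (fun z : (g '' S) => ‖(z:ℂ)‖) = fun z : (g '' S) => ‖(z:ℂ)‖ := by
      funext z; rfl
    rw [this]
    exact habs
  · rw [tsum_image (fun z : ℂ => z) hginj.injOn]
    have h1 : ∀ q : S, g q = c * (((q:ℚ):ℝ):ℂ) := by
      intro q; rw [hg]; push_cast; rfl
    calc ∑' q : S, g q = ∑' q : S, c * (((q:ℚ):ℝ):ℂ) := by
          exact tsum_congr h1
    _ = c * ∑' q : S, (((q:ℚ):ℝ):ℂ) := tsum_mul_left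
    _ = c * r := by
        rw [← Complex.ofReal_tsum, htsum]

lemma disjV {V W : Set ℂ} {c c' : ℂ}
    (hmV : ∀ z ∈ V, ∃ q : ℚ, 0 < q ∧ q < 1 ∧ z = c * (q:ℂ))
    (hmW : ∀ z ∈ W, ∃ q : ℚ, 0 < q ∧ q < 1 ∧ z = c' * (q:ℂ))
    (h : ∀ q q' : ℚ, 0 < q → 0 < q' → c * (q:ℂ) ≠ c' * (q':ℂ)) :
    Disjoint V W := by
  rw [Set.disjoint_left]
  rintro z h1 h2
  obtain ⟨q, hq0, -, heq1⟩ := hmV z h1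
  obtain ⟨q', hq0', -, heq2⟩ := hmW z h2
  rw [heq1] at heq2
  exact h q q' hq0 hq0' heq2

lemma summable_union' {E : Type*} [AddCommMonoid E] [TopologicalSpace E] [ContinuousAdd E]
    {f : ℂ → E} {s t : Set ℂ} (hd : Disjoint s t)
    (hs : Summable fun z : s => f z) (ht : Summable fun z : t => f z) :
    Summable fun z : ↑(s ∪ t) => f z :=
  (hs.hasSum.add_disjoint hd ht.hasSum).summable

/-- `P₁ = ℚ ∩ [0,1)` regarded as a subset of `ℂ`. -/
def P1 : Set ℂ := {z : ℂ | ∃ q : ℚ, 0 ≤ q ∧ q < 1 ∧ z = (q : ℂ)}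

/-- `P = P₁ ∪ (−P₁) ∪ (i·P₁) ∪ (−i·P₁)`. -/
def P : Set ℂ :=
  P1 ∪ ((fun z => -z) '' P1) ∪ ((fun z => Complex.I * z) '' P1) ∪
    ((fun z => -Complex.I * z) '' P1)

set_option maxHeartbeats 2000000

theorem exists_absolutely_summable_subfamily_with_any_sum
    (β : ℕ → ℂ) (hrange : Set.range β = P)
    (hlt : ∀ n, ‖β n‖ < 1) :
    ∀ ω : ℂ, ∃ A : Set ℕ,
      Summable (fun n : A => ‖β n‖) ∧
      ∑' n : A, β n = ω := by
  intro ω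
  obtain ⟨V1, hm1, ha1, hs1, ht1⟩ := partC 1 (by simp) (max ω.re 0) (le_max_right _ _)
  obtain ⟨V2, hm2, ha2, hs2, ht2⟩ := partC (-1) (by simp) (max (-ω.re) 0) (le_max_right _ _)
  obtain ⟨V3, hm3, ha3, hs3, ht3⟩ :=
    partC Complex.I (by simp) (max ω.im 0) (le_max_right _ _)
  obtain ⟨V4, hm4, ha4, hs4, ht4⟩ :=
    partC (-Complex.I) (by simp) (max (-ω.im) 0) (le_max_right _ _)
  -- pairwise disjointness
  have d12 : Disjoint V1 V2 := by
    refine disjV hm1 hm2 ?_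
    intro q q' hq hq' heq
    have h1 := congrArg Complex.re heq
    simp at h1
    have hqR : (0:ℝ) < (q:ℝ) := by exact_mod_cast hq
    have hqR' : (0:ℝ) < (q':ℝ) := by exact_mod_cast hq'
    linarith
  have d13 : Disjoint V1 V3 := by
    refine disjV hm1 hm3 ?_
    intro q q' hq hq' heq
    have h1 := congrArg Complex.re heq
    simp [Complex.mul_re] at h1
    have hqR : (0:ℝ) < (q:ℝ) := by exact_mod_cast hq
    have hqR' : (0:ℝ) < (q':ℝ) := by exact_mod_cast hq'
    linarith
  have d14 : Disjoint V1 V4 := by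
    refine disjV hm1 hm4 ?_
    intro q q' hq hq' heq
    have h1 := congrArg Complex.re heq
    simp [Complex.mul_re] at h1
    have hqR : (0:ℝ) < (q:ℝ) := by exact_mod_cast hq
    have hqR' : (0:ℝ) < (q':ℝ) := by exact_mod_cast hq'
    linarith
  have d23 : Disjoint V2 V3 := by
    refine disjV hm2 hm3 ?_
    intro q q' hq hq' heq
    have h1 := congrArg Complex.re heq
    simp [Complex.mul_re] at h1
    have hqR : (0:ℝ) < (q:ℝ) := by exact_mod_cast hq
    have hqR' : (0:ℝ) < (q':ℝ) := by exact_mod_cast hq'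
    linarith
  have d24 : Disjoint V2 V4 := by
    refine disjV hm2 hm4 ?_
    intro q q' hq hq' heq
    have h1 := congrArg Complex.re heq
    simp [Complex.mul_re] at h1
    have hqR : (0:ℝ) < (q:ℝ) := by exact_mod_cast hq
    have hqR' : (0:ℝ) < (q':ℝ) := by exact_mod_cast hq'
    linarith
  have d34 : Disjoint V3 V4 := by
    refine disjV hm3 hm4 ?_
    intro q q' hq hq' heq
    have h1 := congrArg Complex.im heq
    simp [Complex.mul_im] at h1
    have hqR : (0:ℝ) < (q:ℝ) := by exact_mod_cast hq
    have hqR' : (0:ℝ) < (q':ℝ) := by exact_mod_cast hq'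
    linarith
  have d123 : Disjoint (V1 ∪ V2) V3 := Set.disjoint_union_left.mpr ⟨d13, d23⟩
  have d1234 : Disjoint (V1 ∪ V2 ∪ V3) V4 :=
    Set.disjoint_union_left.mpr ⟨Set.disjoint_union_left.mpr ⟨d14, d24⟩, d34⟩
  set V : Set ℂ := V1 ∪ V2 ∪ V3 ∪ V4 with hV
  -- summability over V
  have habsV : Summable fun z : V => ‖(z:ℂ)‖ :=
    summable_union' d1234 (summable_union' d123 (summable_union' d12 ha1 ha2) ha3) ha4
  have hidV : Summable fun z : V => (z : ℂ) :=
    summable_union' (f := fun z : ℂ => z) d1234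
      (summable_union' (f := fun z : ℂ => z) d123
        (summable_union' (f := fun z : ℂ => z) d12 hs1 hs2) hs3) hs4
  -- sum over V
  have htV : ∑' z : V, (z : ℂ) = ω := by
    rw [hV]
    rw [Summable.tsum_union_disjoint (f := fun z : ℂ => z) d1234
      (summable_union' (f := fun z : ℂ => z) d123
        (summable_union' (f := fun z : ℂ => z) d12 hs1 hs2) hs3) hs4,
      Summable.tsum_union_disjoint (f := fun z : ℂ => z) d123
        (summable_union' (f := fun z : ℂ => z) d12 hs1 hs2) hs3,
      Summable.tsum_union_disjoint (f := fun z : ℂ => z) d12 hs1 hs2,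
      ht1, ht2, ht3, ht4]
    have hre : (max ω.re 0) - (max (-ω.re) 0) = ω.re := max_zero_sub_max_neg_zero_eq_self ω.re
    have him : (max ω.im 0) - (max (-ω.im) 0) = ω.im := max_zero_sub_max_neg_zero_eq_self ω.im
    rw [Complex.ext_iff]
    constructor
    · simp [Complex.add_re, Complex.mul_re]
      linarith
    · simp [Complex.add_im, Complex.mul_im]
      linarith
  -- V ⊆ P
  have hVP : ∀ z ∈ V, z ∈ P := by
    intro z hz
    rcases hz with ((hz | hz) | hz) | hz
    · obtain ⟨q, hq0, hq1, rfl⟩ := hm1 z hz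
      exact Or.inl (Or.inl (Or.inl ⟨q, le_of_lt hq0, hq1, by rw [one_mul]⟩))
    · obtain ⟨q, hq0, hq1, rfl⟩ := hm2 z hz
      exact Or.inl (Or.inl (Or.inr ⟨(q:ℂ), ⟨q, le_of_lt hq0, hq1, rfl⟩, by ring⟩))
    · obtain ⟨q, hq0, hq1, rfl⟩ := hm3 z hz
      exact Or.inl (Or.inr ⟨(q:ℂ), ⟨q, le_of_lt hq0, hq1, rfl⟩, rfl⟩)
    · obtain ⟨q, hq0, hq1, rfl⟩ := hm4 z hz
      exact Or.inr ⟨(q:ℂ), ⟨q, le_of_lt hq0, hq1, rfl⟩, rfl⟩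
  have hVrange : ∀ z ∈ V, z ∈ Set.range β := by
    intro z hz; rw [hrange]; exact hVP z hz
  -- choose indices
  classical
  set e : ℂ → ℕ := fun z => if h : z ∈ Set.range β then h.choose else 0 with he
  have hbe : ∀ z ∈ Set.range β, β (e z) = z := by
    intro z hz
    rw [he]
    simp only [dif_pos hz]
    exact hz.choose_spec
  have hinjE : Set.InjOn e V := by
    intro z hz w hw h
    rw [← hbe z (hVrange z hz), ← hbe w (hVrange w hw), h]
  refine ⟨e '' V, ?_, ?_⟩
  · rw [← (Equiv.Set.imageOfInjOn e V hinjE).summable_iff]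
    have : ((fun n : (e '' V) => ‖β n‖) ∘ (Equiv.Set.imageOfInjOn e V hinjE)) =
        fun z : V => ‖(z:ℂ)‖ := by
      funext z
      show ‖β (e z)‖ = _
      rw [hbe z (hVrange z z.2)]
    rw [this]
    exact habsV
  · rw [← Equiv.tsum_eq (Equiv.Set.imageOfInjOn e V hinjE) (fun n : (e '' V) => β n)]
    have : (fun z : V => β ((Equiv.Set.imageOfInjOn e V hinjE z : ℕ))) =
        fun z : V => (z : ℂ) := by
      funext z
      show β (e z) = _
      rw [hbe z (hVrange z z.2)]
    rw [show (fun z : V => (fun n : (e '' V) => β n) (Equiv.Set.imageOfInjOn e V hinjE z)) =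
      fun z : V => (z : ℂ) from this]
    exact htV
end

section
/- Let A ⊆ ℕ, let β : ℕ → ℂ satisfy |β_n| ≤ 1 for all n; suppose β_n is a positive real number for every n ∈ A and ∑_{n∈A} β_n = +∞ (the partial sums over finite subsets of A are unbounded). Let f_n : (0,∞) → ℂ satisfy: (i) for every n ∉ A, |f_n(r)| ≤ (3/4)^n for all r > 0; (ii) for every n ∈ A, Re(β_n · f_n(r)) ≥ 0 for all r > 0 and f_n(r) → 1 as r → ∞; (iii) for every r > 0 the family (β_n · f_n(r))_{n∈ℕ} is absolutely summable. Then Re(∑_{n=0}^∞ β_n · f_n(r)) → +∞ as r → ∞; in particular |∑_{n=0}^∞ β_n · f_n(r)| → ∞ as r → ∞. -/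
open Complex Filter Topology

theorem tsum_re_tendsto_atTop_of_divergent_positive_part
    (A : Set ℕ) (β : ℕ → ℂ) (f : ℕ → ℝ → ℂ)
    (hβ : ∀ n, ‖β n‖ ≤ 1)
    (hβpos : ∀ n ∈ A, 0 < (β n).re ∧ (β n).im = 0)
    (hβdiv : ∀ M : ℝ, ∃ s : Finset ℕ, ↑s ⊆ A ∧ M < ∑ n ∈ s, (β n).re)
    (hout_bd : ∀ n ∉ A, ∀ r : ℝ, 0 < r →
      ‖f n r‖ ≤ (3 / 4 : ℝ) ^ n)
    (hin_re : ∀ n ∈ A, ∀ r : ℝ, 0 < r → 0 ≤ (β n * f n r).re)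
    (hin_lim : ∀ n ∈ A, Tendsto (fun r : ℝ => f n r) atTop (𝓝 1))
    (hsum : ∀ r : ℝ, 0 < r → Summable (fun n : ℕ => ‖β n * f n r‖)) :
    Tendsto (fun r : ℝ => (∑' n : ℕ, β n * f n r).re) atTop atTop ∧
      Tendsto (fun r : ℝ => ‖∑' n : ℕ, β n * f n r‖) atTop atTop := by
  have hgeo : Summable (fun n : ℕ => ((3:ℝ)/4) ^ n) :=
    summable_geometric_of_lt_one (by norm_num) (by norm_num)
  have hgeo4 : ∑' n : ℕ, ((3:ℝ)/4) ^ n = 4 := by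
    rw [tsum_geometric_of_lt_one (by norm_num) (by norm_num)]; norm_num
  have key : Tendsto (fun r : ℝ => (∑' n : ℕ, β n * f n r).re) atTop atTop := by
    rw [tendsto_atTop]
    intro M
    obtain ⟨s, hsA, hs⟩ := hβdiv (2 * (M + 4))
    have hev : ∀ᶠ r : ℝ in atTop,
        0 < r ∧ ∀ n ∈ s, ‖f n r - 1‖ < 1/2 := by
      refine (eventually_gt_atTop 0).and ?_
      rw [eventually_all_finset]
      intro n hn
      have h := Metric.tendsto_nhds.1 (hin_lim n (hsA hn)) (1/2) (by norm_num)
      simpa [Complex.dist_eq] using h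
    filter_upwards [hev] with r hr
    obtain ⟨hr0, hclose⟩ := hr
    have hS : Summable (fun n : ℕ => β n * f n r) :=
      Summable.of_norm (by simpa using hsum r hr0)
    set g : ℕ → ℝ := fun n => (β n * f n r).re with hg
    have hgsum : Summable g := by
      refine Summable.of_abs (Summable.of_nonneg_of_le (fun n => abs_nonneg _)
        (fun n => ?_) (hsum r hr0))
      exact (Complex.abs_re_le_norm _)
    have hre : (∑' n : ℕ, β n * f n r).re = ∑' n : ℕ, g n := Complex.re_tsum hS
    have hsplit : (∑ n ∈ s, g n) + ∑' (n : ↑((↑s : Set ℕ)ᶜ)), g n = ∑' n, g n :=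
      Summable.sum_add_tsum_compl hgsum
    -- lower bound on the finite sum
    have hmain : M + 4 ≤ ∑ n ∈ s, g n := by
      have hterm : ∀ n ∈ s, (β n).re / 2 ≤ g n := by
        intro n hn
        have hnA := hsA hn
        obtain ⟨hbpos, hbim⟩ := hβpos n hnA
        have hf : (1:ℝ)/2 ≤ (f n r).re := by
          have h1 : |(f n r - 1).re| ≤ ‖f n r - 1‖ :=
            Complex.abs_re_le_norm _
          have h2 : |(f n r).re - 1| < 1/2 := by
            have := hclose n hn
            calc |(f n r).re - 1| = |(f n r - 1).re| := by simp
              _ ≤ _ := h1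
              _ < 1/2 := this
          have := (abs_lt.1 h2).1
          linarith
        have : g n = (β n).re * (f n r).re := by
          simp [hg, Complex.mul_re, hbim]
        rw [this]
        calc (β n).re / 2 = (β n).re * (1/2) := by ring
          _ ≤ (β n).re * (f n r).re :=
            mul_le_mul_of_nonneg_left hf hbpos.le
      calc M + 4 ≤ (2 * (M + 4)) / 2 := by linarith
        _ ≤ (∑ n ∈ s, (β n).re) / 2 := by linarith
        _ = ∑ n ∈ s, (β n).re / 2 := by rw [Finset.sum_div]
        _ ≤ ∑ n ∈ s, g n := Finset.sum_le_sum hterm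
    -- lower bound on the tail
    have htail : (-4 : ℝ) ≤ ∑' (n : ↑((↑s : Set ℕ)ᶜ)), g n := by
      have hle : ∀ n : ↑((↑s : Set ℕ)ᶜ), -((3:ℝ)/4) ^ (n : ℕ) ≤ g n := by
        rintro ⟨n, -⟩
        by_cases hnA : n ∈ A
        · have := hin_re n hnA r hr0
          have : (0:ℝ) ≤ g n := this
          nlinarith [pow_nonneg (by norm_num : (0:ℝ) ≤ 3/4) n]
        · have h1 : ‖β n * f n r‖ ≤ ((3:ℝ)/4) ^ n := by
            rw [norm_mul]
            calc ‖β n‖ * ‖f n r‖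
                ≤ 1 * ((3:ℝ)/4) ^ n :=
                  mul_le_mul (hβ n) (hout_bd n hnA r hr0)
                    (norm_nonneg _) zero_le_one
              _ = ((3:ℝ)/4) ^ n := one_mul _
          have h2 : -‖β n * f n r‖ ≤ g n :=
            neg_le_of_abs_le (Complex.abs_re_le_norm _)
          linarith
      have hsub : ∑' (n : ↑((↑s : Set ℕ)ᶜ)), -((3:ℝ)/4) ^ (n : ℕ)
          ≤ ∑' (n : ↑((↑s : Set ℕ)ᶜ)), g n :=
        Summable.tsum_le_tsum hle (hgeo.subtype _).neg (hgsum.subtype _)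
      have hsub2 : ∑' (n : ↑((↑s : Set ℕ)ᶜ)), -((3:ℝ)/4) ^ (n : ℕ)
          = -∑' (n : ↑((↑s : Set ℕ)ᶜ)), ((3:ℝ)/4) ^ (n : ℕ) := tsum_neg
      have hsub3 : ∑' (n : ↑((↑s : Set ℕ)ᶜ)), ((3:ℝ)/4) ^ (n : ℕ) ≤ 4 := by
        calc ∑' (n : ↑((↑s : Set ℕ)ᶜ)), ((3:ℝ)/4) ^ (n : ℕ)
            ≤ ∑' n : ℕ, ((3:ℝ)/4) ^ n :=
              Summable.tsum_subtype_le _ _ (fun n => pow_nonneg (by norm_num) n) hgeo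
          _ = 4 := hgeo4
      linarith
    rw [hre, ← hsplit]
    linarith
  refine ⟨key, ?_⟩
  exact tendsto_atTop_mono (fun r => Complex.re_le_norm _) key
end

section
/- Let (N_n)_{n≥1} be a sequence of positive integers, let (r_n)_{n≥1} be a strictly increasing sequence of real numbers with r_1 > e and r_{n+1} ≥ e·r_n for all n ≥ 1, set λ_n = 1/(8·r_n^{N_n}), and let (β_n)_{n≥1} be complex numbers with |β_n| < 1 for all n. Then the series ∑_{n=1}^∞ β_n · (φ₀(λ_n·z^{N_n}))^n converges locally uniformly on ℂ, and hence defines an entire function φ : ℂ → ℂ. -/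
open Complex MeasureTheory Filter Topology

open Metric

lemma integral_part_diff : Differentiable ℂ
    (fun z : ℂ => ∫ t in (0:ℝ)..1, z * Complex.exp (-((t : ℂ) * z) ^ 2)) := by
  intro z₀
  set C : ℝ := Real.exp ((‖z₀‖ + 1)^2) * (1 + 2 * (‖z₀‖ + 1)^2) with hC
  have key := intervalIntegral.hasDerivAt_integral_of_dominated_loc_of_deriv_le
    (𝕜 := ℂ) (μ := volume) (a := (0:ℝ)) (b := 1) (x₀ := z₀)
    (F := fun z t => z * Complex.exp (-((t : ℂ) * z) ^ 2))
    (F' := fun z t => Complex.exp (-((t : ℂ) * z) ^ 2) * (1 - 2 * (t:ℂ)^2 * z^2))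
    (bound := fun _ => C) (s := ball z₀ 1) (ball_mem_nhds z₀ one_pos)
    ?_ ?_ ?_ ?_ ?_ ?_
  · exact key.2.differentiableAt
  · filter_upwards with x
    exact (Continuous.aestronglyMeasurable (by continuity)).restrict
  · exact (Continuous.intervalIntegrable (by continuity) _ _)
  · exact (Continuous.aestronglyMeasurable (by continuity)).restrict
  · filter_upwards with t ht x hx
    have ht' : t ∈ Set.Ioc (0:ℝ) 1 := by simpa [Set.uIoc_of_le] using ht
    have hxz : ‖x‖ ≤ ‖z₀‖ + 1 := by
      have := mem_ball_iff_norm.mp hx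
      calc ‖x‖ = ‖x - z₀ + z₀‖ := by norm_num
        _ ≤ ‖x - z₀‖ + ‖z₀‖ := norm_add_le _ _
        _ ≤ ‖z₀‖ + 1 := by
            rw [add_comm (‖z₀‖)]
            exact add_le_add (le_of_lt this) le_rfl
    have htx : ‖(t:ℂ) * x‖ ≤ ‖z₀‖ + 1 := by
      rw [norm_mul]
      have : ‖(t:ℂ)‖ ≤ 1 := by
        rw [Complex.norm_real, Real.norm_eq_abs, abs_of_pos ht'.1]; exact ht'.2
      calc ‖(t:ℂ)‖ * ‖x‖ ≤ 1 * (‖z₀‖ + 1) :=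
            mul_le_mul this hxz (norm_nonneg x) zero_le_one
        _ = ‖z₀‖ + 1 := one_mul _
    rw [norm_mul]
    have h1 : ‖Complex.exp (-((t : ℂ) * x) ^ 2)‖ ≤ Real.exp ((‖z₀‖ + 1)^2) := by
      rw [Complex.norm_exp]
      apply Real.exp_le_exp.mpr
      calc (-((t : ℂ) * x) ^ 2).re ≤ ‖-((t : ℂ) * x) ^ 2‖ := Complex.re_le_norm _
        _ = ‖(t:ℂ)*x‖^2 := by rw [norm_neg, norm_pow]
        _ ≤ (‖z₀‖ + 1)^2 := by
            apply pow_le_pow_left₀ (norm_nonneg _) htx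
    have h2 : ‖1 - 2 * (t:ℂ)^2 * x^2‖ ≤ 1 + 2 * (‖z₀‖ + 1)^2 := by
      calc ‖1 - 2 * (t:ℂ)^2 * x^2‖ ≤ ‖(1:ℂ)‖ + ‖2 * (t:ℂ)^2 * x^2‖ := norm_sub_le _ _
        _ ≤ 1 + 2 * (‖z₀‖ + 1)^2 := by
            rw [norm_one]
            gcongr
            rw [norm_mul, norm_mul]
            have h2' : ‖(2:ℂ)‖ = 2 := by norm_num
            have ht2 : ‖(t:ℂ)^2‖ ≤ 1 := by
              rw [norm_pow, Complex.norm_real, Real.norm_eq_abs, abs_of_pos ht'.1]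
              exact pow_le_one₀ (le_of_lt ht'.1) ht'.2
            have hx2 : ‖x^2‖ ≤ (‖z₀‖ + 1)^2 := by
              rw [norm_pow]
              exact pow_le_pow_left₀ (norm_nonneg _) hxz 2
            calc ‖(2:ℂ)‖ * ‖(t:ℂ)^2‖ * ‖x^2‖ ≤ 2 * 1 * (‖z₀‖ + 1)^2 := by
                  gcongr <;> simp [h2']
              _ = 2 * (‖z₀‖ + 1)^2 := by ring
    calc ‖Complex.exp (-((t : ℂ) * x) ^ 2)‖ * ‖1 - 2 * (t:ℂ)^2 * x^2‖
        ≤ Real.exp ((‖z₀‖ + 1)^2) * (1 + 2 * (‖z₀‖ + 1)^2) := by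
          apply mul_le_mul h1 h2 (norm_nonneg _) (Real.exp_pos _).le
      _ = C := rfl
  · exact intervalIntegrable_const
  · filter_upwards with t ht x hx
    have h1 : HasDerivAt (fun z : ℂ => -((t : ℂ) * z) ^ 2) (-(2 * ((t:ℂ)*x) * t)) x := by
      have := (((hasDerivAt_id x).const_mul (t:ℂ)).fun_pow 2).fun_neg
      refine this.congr_deriv ?_
      simp only [id_eq]
      ring
    have h2 : HasDerivAt (fun z : ℂ => Complex.exp (-((t : ℂ) * z) ^ 2))
        (Complex.exp (-((t:ℂ)*x)^2) * (-(2 * ((t:ℂ)*x) * t))) x := h1.cexp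
    have h3 := (hasDerivAt_id x).fun_mul h2
    refine h3.congr_deriv ?_
    simp only [id_eq]
    ring

lemma phi0_diff : Differentiable ℂ phi0 := by
  unfold phi0
  apply Differentiable.const_mul
  apply Differentiable.add
  apply Differentiable.sub
  · exact integral_part_diff.const_mul _
  · exact Complex.differentiable_exp.comp ((differentiable_pow 2).neg)
  · exact differentiable_const 1

lemma phi0_bound {w : ℂ} (hw : ‖w‖ ≤ 1/8) : ‖phi0 w‖ ≤ 1/2 := by
  have hexp3 : Real.exp 1 ≤ 3 := by
    have := Real.exp_one_lt_d9; linarith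
  have hIbound : ‖∫ t in (0:ℝ)..1, w * Complex.exp (-((t : ℂ) * w) ^ 2)‖
      ≤ (1/8) * 3 := by
    have := intervalIntegral.norm_integral_le_of_norm_le_const (C := (1/8)*3)
      (f := fun t : ℝ => w * Complex.exp (-((t : ℂ) * w) ^ 2)) (a := 0) (b := 1) ?_
    · simpa using this
    · intro t ht
      have ht' : t ∈ Set.Ioc (0:ℝ) 1 := by simpa [Set.uIoc_of_le] using ht
      rw [norm_mul]
      have h1 : ‖w‖ ≤ 1/8 := hw
      have h2 : ‖Complex.exp (-((t : ℂ) * w) ^ 2)‖ ≤ 3 := by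
        rw [Complex.norm_exp]
        have : (-((t : ℂ) * w) ^ 2).re ≤ 1 := by
          calc (-((t : ℂ) * w) ^ 2).re ≤ ‖-((t : ℂ) * w) ^ 2‖ := Complex.re_le_norm _
            _ = (‖(t:ℂ)*w‖)^2 := by rw [norm_neg, norm_pow]
            _ ≤ 1 := by
                apply pow_le_one₀ (norm_nonneg _)
                rw [norm_mul, Complex.norm_real, Real.norm_eq_abs, abs_of_pos ht'.1]
                calc t * ‖w‖ ≤ 1 * (1/8) :=
                      mul_le_mul ht'.2 hw (norm_nonneg _) zero_le_one
                  _ ≤ 1 := by norm_num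
        calc Real.exp (-((t : ℂ) * w) ^ 2).re ≤ Real.exp 1 := Real.exp_le_exp.mpr this
          _ ≤ 3 := hexp3
      exact mul_le_mul h1 h2 (norm_nonneg _) (by norm_num)
  have hsqrtpi : 1 ≤ Real.sqrt Real.pi := by
    rw [show (1:ℝ) = Real.sqrt 1 by simp]
    exact Real.sqrt_le_sqrt (by linarith [Real.pi_gt_three])
  have hA : ‖(2 / (Real.sqrt Real.pi : ℂ)) *
      (∫ t in (0:ℝ)..1, w * Complex.exp (-((t : ℂ) * w) ^ 2))‖ ≤ 3/4 := by
    rw [norm_mul, norm_div]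
    have h1 : ‖(2:ℂ)‖ = 2 := by norm_num
    have h2 : ‖(Real.sqrt Real.pi : ℂ)‖ = Real.sqrt Real.pi := by
      rw [Complex.norm_real, Real.norm_eq_abs, _root_.abs_of_nonneg (Real.sqrt_nonneg _)]
    rw [h1, h2]
    have hd : 2 / Real.sqrt Real.pi ≤ 2 := by
      rw [div_le_iff₀ (by linarith)]
      linarith
    calc 2 / Real.sqrt Real.pi * ‖∫ t in (0:ℝ)..1, w * Complex.exp (-((t : ℂ) * w) ^ 2)‖
        ≤ 2 * ((1/8)*3) := mul_le_mul hd hIbound (norm_nonneg _) (by norm_num)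
      _ = 3/4 := by norm_num
  have hB : ‖1 - Complex.exp (-w ^ 2)‖ ≤ 1/32 := by
    rw [← norm_neg, neg_sub]
    have hw2 : ‖-w^2‖ ≤ 1 := by
      rw [norm_neg, norm_pow]
      apply pow_le_one₀ (norm_nonneg _) (hw.trans (by norm_num))
    calc ‖Complex.exp (-w^2) - 1‖ ≤ 2 * ‖-w^2‖ :=
          Complex.norm_exp_sub_one_le hw2
      _ = 2 * (‖w‖)^2 := by rw [norm_neg, norm_pow]
      _ ≤ 2 * (1/8)^2 := by gcongr
      _ ≤ 1/32 := by norm_num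
  unfold phi0
  rw [norm_mul]
  have : ‖(1/2 : ℂ)‖ = 1/2 := by norm_num
  rw [this]
  have key : ‖(2 / (Real.sqrt Real.pi : ℂ)) *
      (∫ t in (0:ℝ)..1, w * Complex.exp (-((t : ℂ) * w) ^ 2))
    - Complex.exp (-w ^ 2) + 1‖ ≤ 3/4 + 1/32 := by
    have : (2 / (Real.sqrt Real.pi : ℂ)) *
      (∫ t in (0:ℝ)..1, w * Complex.exp (-((t : ℂ) * w) ^ 2))
      - Complex.exp (-w ^ 2) + 1 = (2 / (Real.sqrt Real.pi : ℂ)) *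
      (∫ t in (0:ℝ)..1, w * Complex.exp (-((t : ℂ) * w) ^ 2)) + (1 - Complex.exp (-w ^ 2)) := by
      ring
    rw [this]
    exact (norm_add_le _ _).trans (add_le_add hA hB)
  calc (1/2 : ℝ) * ‖_‖ ≤ (1/2) * (3/4 + 1/32) := by
        apply mul_le_mul_of_nonneg_left key (by norm_num)
    _ ≤ 1/2 := by norm_num


theorem series_defining_phi_converges_locally_uniformly
    (N : ℕ → ℕ) (hN : ∀ n ≥ 1, 0 < N n)
    (r : ℕ → ℝ)
    (hr1 : Real.exp 1 < r 1)
    (hrmono : ∀ n ≥ 1, r n < r (n + 1))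
    (hrstep : ∀ n ≥ 1, Real.exp 1 * r n ≤ r (n + 1))
    (lam : ℕ → ℝ) (hlam : ∀ n ≥ 1, lam n = 1 / (8 * r n ^ N n))
    (β : ℕ → ℂ) (hβ : ∀ n ≥ 1, ‖β n‖ < 1) :
    TendstoLocallyUniformly
        (fun (m : ℕ) (z : ℂ) =>
          ∑ n ∈ Finset.range m, β (n + 1) *
            (phi0 ((lam (n + 1) : ℂ) * z ^ N (n + 1))) ^ (n + 1))
        (fun z : ℂ =>
          ∑' n : ℕ, β (n + 1) *
            (phi0 ((lam (n + 1) : ℂ) * z ^ N (n + 1))) ^ (n + 1))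
        atTop ∧
      Differentiable ℂ
        (fun z : ℂ =>
          ∑' n : ℕ, β (n + 1) *
            (phi0 ((lam (n + 1) : ℂ) * z ^ N (n + 1))) ^ (n + 1)) := by
  have he1 : (1:ℝ) < Real.exp 1 := by
    have := Real.exp_one_gt_d9; linarith
  have he0 : (0:ℝ) < Real.exp 1 := by linarith
  have hr1pos : 0 < r 1 := lt_trans he0 hr1
  -- growth of r
  have hgrow : ∀ n : ℕ, (Real.exp 1)^n * r 1 ≤ r (n + 1) := by
    intro n
    induction n with
    | zero => simp
    | succ k ih =>
      have h1 := hrstep (k+1) (by omega)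
      calc (Real.exp 1)^(k+1) * r 1 = Real.exp 1 * ((Real.exp 1)^k * r 1) := by ring
        _ ≤ Real.exp 1 * r (k+1) := by
            apply mul_le_mul_of_nonneg_left ih he0.le
        _ ≤ r (k+1+1) := h1
  have hrpos : ∀ n : ℕ, 0 < r (n + 1) := by
    intro n
    calc (0:ℝ) < (Real.exp 1)^n * r 1 := by positivity
      _ ≤ r (n+1) := hgrow n
  have hrtendsto : Tendsto (fun n : ℕ => r (n + 1)) atTop atTop := by
    apply tendsto_atTop_mono hgrow
    exact (tendsto_pow_atTop_atTop_of_one_lt he1).atTop_mul_const hr1pos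
  -- summable bound
  have hu : Summable (fun n : ℕ => (1/2:ℝ)^(n+1)) :=
    (summable_nat_add_iff 1).mpr summable_geometric_two
  -- key: uniform convergence on each compact
  have key : ∀ K : Set ℂ, IsCompact K →
      TendstoUniformlyOn
        (fun (m : ℕ) (z : ℂ) =>
          ∑ n ∈ Finset.range m, β (n + 1) *
            (phi0 ((lam (n + 1) : ℂ) * z ^ N (n + 1))) ^ (n + 1))
        (fun z : ℂ =>
          ∑' n : ℕ, β (n + 1) *
            (phi0 ((lam (n + 1) : ℂ) * z ^ N (n + 1))) ^ (n + 1)) atTop K := by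
    intro K hK
    obtain ⟨R, hR⟩ := hK.isBounded.subset_closedBall 0
    have hev : ∀ᶠ n : ℕ in atTop, ∀ x ∈ K,
        ‖β (n + 1) * (phi0 ((lam (n + 1) : ℂ) * x ^ N (n + 1))) ^ (n + 1)‖ ≤ (1/2:ℝ)^(n+1) := by
      filter_upwards [hrtendsto.eventually_ge_atTop R] with n hn x hxK
      have hx : ‖x‖ ≤ r (n+1) := by
        have : x ∈ closedBall 0 R := hR hxK
        rw [mem_closedBall, dist_zero_right] at this
        exact le_trans this hn
      have h0 : 0 < r (n+1) := hrpos n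
      have hlampos : 0 < lam (n+1) := by
        rw [hlam (n+1) (by omega)]
        positivity
      have hwbound : ‖(lam (n + 1) : ℂ) * x ^ N (n + 1)‖ ≤ 1/8 := by
        rw [norm_mul, norm_pow, Complex.norm_real, Real.norm_eq_abs, _root_.abs_of_pos hlampos,
          hlam (n+1) (by omega)]
        rw [div_mul_eq_mul_div, one_mul, div_le_iff₀ (by positivity)]
        calc ‖x‖ ^ N (n+1) ≤ r (n+1) ^ N (n+1) := by
              gcongr
          _ = 1/8 * (8 * r (n+1) ^ N (n+1)) := by ring
      have hphi := phi0_bound hwbound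
      rw [norm_mul, norm_pow]
      calc ‖β (n+1)‖ * ‖phi0 ((lam (n + 1) : ℂ) * x ^ N (n + 1))‖ ^ (n+1)
          ≤ 1 * (1/2:ℝ)^(n+1) := by
            apply mul_le_mul (hβ (n+1) (by omega)).le _ (by positivity) zero_le_one
            exact pow_le_pow_left₀ (norm_nonneg _) hphi _
        _ = (1/2:ℝ)^(n+1) := one_mul _
    have hU := tendstoUniformlyOn_tsum_of_cofinite_eventually hu
      (by rw [Nat.cofinite_eq_atTop]; exact hev)
    exact fun v hv => tendsto_finset_range.eventually (hU v hv)
  have hTLU : TendstoLocallyUniformly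
        (fun (m : ℕ) (z : ℂ) =>
          ∑ n ∈ Finset.range m, β (n + 1) *
            (phi0 ((lam (n + 1) : ℂ) * z ^ N (n + 1))) ^ (n + 1))
        (fun z : ℂ =>
          ∑' n : ℕ, β (n + 1) *
            (phi0 ((lam (n + 1) : ℂ) * z ^ N (n + 1))) ^ (n + 1)) atTop := by
    rw [tendstoLocallyUniformly_iff_forall_isCompact]
    exact key
  refine ⟨hTLU, ?_⟩
  have hdiff : ∀ m : ℕ, Differentiable ℂ
      (fun z : ℂ => ∑ n ∈ Finset.range m, β (n + 1) *
        (phi0 ((lam (n + 1) : ℂ) * z ^ N (n + 1))) ^ (n + 1)) := by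
    intro m
    apply Differentiable.fun_sum
    intro i _
    apply Differentiable.const_mul
    apply Differentiable.pow
    exact phi0_diff.comp ((differentiable_pow _).const_mul _)
  rw [← differentiableOn_univ]
  exact (tendstoLocallyUniformlyOn_univ.mpr hTLU).differentiableOn
    (Eventually.of_forall fun m => (hdiff m).differentiableOn) isOpen_univ
end
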